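/- If $w \in \mathcal{L}^{\alpha,p}$ with $\alpha > 0$ and $1 < p \le n/\alpha$, then $w \in \mathcal{KS}_\alpha$, i.e., the Morrey–Campanato class with exponent $p > 1$ is contained in the Kerman–Sawyer class. -/

import Mathlib

open MeasureTheory ENNReal Real
open scoped RealInnerProductSpace

noncomputable section

abbrev Rn (n : ℕ) := EuclideanSpace ℝ (Fin n)

/-- A dyadic cube in `ℝⁿ`. -/
def IsDyadicCube (n : ℕ) (Q : Set (Rn n)) : Prop :=
  ∃ (j : ℤ) (k : Fin n → ℤ),
    Q = {x : Rn n | ∀ i, (k i : ℝ) * 2 ^ j ≤ x i ∧ x i < ((k i : ℝ) + 1) * 2 ^ j}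

/-- Kerman–Sawyer "norm". -/
def KSnorm (n : ℕ) (α : ℝ) (w : Rn n → ℝ) : ℝ≥0∞ :=
  ⨆ Q : {Q : Set (Rn n) // IsDyadicCube n Q},
    (∫⁻ x in Q.1, ENNReal.ofReal (w x))⁻¹ *
      ∫⁻ x in Q.1, ∫⁻ y in Q.1, ENNReal.ofReal (w x * w y * ‖x - y‖ ^ (α - n))

/-- Morrey–Campanato "norm". -/
def MCnorm (n : ℕ) (α p : ℝ) (w : Rn n → ℝ) : ℝ≥0∞ :=
  ⨆ (x : Rn n) (r : {r : ℝ // 0 < r}),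
    ENNReal.ofReal (r.1 ^ α) *
      ((ENNReal.ofReal (r.1 ^ (n : ℝ)))⁻¹ *
        ∫⁻ y in Metric.ball x r.1, ENNReal.ofReal (w y ^ p)) ^ (1 / p)

/-- Surface measure on the sphere of radius `ρ`. -/
def sphMeasureR (n : ℕ) (ρ : ℝ) : Measure (Rn n) :=
  (μH[(n : ℝ) - 1]).restrict (Metric.sphere (0 : Rn n) ρ)

def sphMeasure (n : ℕ) : Measure (Rn n) := sphMeasureR n 1

/-- Fourier extension from the sphere of radius `ρ`. -/
def extR (n : ℕ) (ρ : ℝ) (f : Rn n → ℂ) (x : Rn n) : ℂ :=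
  ∫ ω, Complex.exp (-(Complex.I * (⟪x, ω⟫ : ℝ))) * f ω ∂(sphMeasureR n ρ)

def extS (n : ℕ) (f : Rn n → ℂ) (x : Rn n) : ℂ := extR n 1 f x

/-- Fourier transform. -/
def ft (n : ℕ) (f : Rn n → ℂ) (ξ : Rn n) : ℂ :=
  ∫ x, Complex.exp (-(Complex.I * (⟪x, ξ⟫ : ℝ))) * f x

/-- Convolution. -/
def conv (n : ℕ) (K f : Rn n → ℂ) (x : Rn n) : ℂ :=
  ∫ y, K (x - y) * f y

/-- `|∇|^s e^{-it(-Δ)^{γ/2}} f`. -/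
def fracProp (n : ℕ) (s γ t : ℝ) (f : Rn n → ℂ) (x : Rn n) : ℂ :=
  ((2 * π) ^ (-(n : ℝ)) : ℝ) •
    ∫ ξ, (Real.rpow ‖ξ‖ s) •
      (Complex.exp (Complex.I * ((⟪x, ξ⟫ - t * ‖ξ‖ ^ γ : ℝ) : ℂ)) * ft n f ξ)

def L2w (n : ℕ) (w : Rn n → ℝ) (g : Rn n → ℂ) : ℝ≥0∞ :=
  ∫⁻ x, (‖g x‖₊ : ℝ≥0∞) ^ 2 * ENNReal.ofReal (w x)



/- ======================================================================
   Auxiliary development for the proof.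
   ====================================================================== -/

open scoped Classical

namespace MCKS

/-- dyadic cube -/
def cube (n : ℕ) (j : ℤ) (k : Fin n → ℤ) : Set (Rn n) :=
  {x : Rn n | ∀ i, (k i : ℝ) * 2 ^ j ≤ x i ∧ x i < ((k i : ℝ) + 1) * 2 ^ j}

variable {n : ℕ}

lemma zp (j : ℤ) : (0:ℝ) < 2 ^ j := zpow_pos (by norm_num) j

def idx (j : ℤ) (x : Rn n) : Fin n → ℤ := fun i => ⌊x i / 2 ^ j⌋

lemma mem_cube {j : ℤ} {k : Fin n → ℤ} {x : Rn n} :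
    x ∈ cube n j k ↔ ∀ i, idx j x i = k i := by
  unfold cube idx
  simp only [Set.mem_setOf_eq]
  refine forall_congr' fun i => ?_
  rw [Int.floor_eq_iff]
  constructor
  · rintro ⟨h1, h2⟩
    constructor
    · rwa [le_div_iff₀ (zp j)]
    · rw [div_lt_iff₀ (zp j)]; linarith
  · rintro ⟨h1, h2⟩
    constructor
    · rwa [← le_div_iff₀ (zp j)]
    · rw [← div_lt_iff₀ (zp j)] at *; linarith

lemma mem_cube_idx (j : ℤ) (x : Rn n) : x ∈ cube n j (idx j x) := mem_cube.2 fun _ => rfl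

lemma cube_disjoint {j : ℤ} {k k' : Fin n → ℤ} (h : k ≠ k') :
    Disjoint (cube n j k) (cube n j k') := by
  rw [Set.disjoint_left]
  intro x hx hx'
  exact h (funext fun i => (mem_cube.1 hx i).symm.trans (mem_cube.1 hx' i))

lemma iUnion_cube (j : ℤ) : (⋃ k : Fin n → ℤ, cube n j k) = Set.univ := by
  ext x; simp only [Set.mem_iUnion, Set.mem_univ, iff_true]
  exact ⟨idx j x, mem_cube_idx j x⟩

lemma measurable_coord (i : Fin n) : Measurable (fun x : Rn n => x i) :=
  (measurable_pi_apply i).comp (MeasurableEquiv.toLp 2 (Fin n → ℝ)).symm.measurable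

lemma measurableSet_cube {j : ℤ} {k : Fin n → ℤ} : MeasurableSet (cube n j k) := by
  have : cube n j k = ⋂ i, ((fun x : Rn n => x i) ⁻¹'
      (Set.Ico ((k i : ℝ) * 2 ^ j) (((k i : ℝ) + 1) * 2 ^ j))) := by
    ext x; simp [cube, Set.mem_Ico]
  rw [this]
  exact MeasurableSet.iInter fun i => (measurable_coord i) measurableSet_Ico

/-- the key nesting lemma -/
lemma cube_subset {j₁ j₂ : ℤ} {k₁ k₂ : Fin n → ℤ} (hj : j₂ ≤ j₁) {x : Rn n}
    (h₂ : x ∈ cube n j₂ k₂) (h₁ : x ∈ cube n j₁ k₁) : cube n j₂ k₂ ⊆ cube n j₁ k₁ := by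
  intro y hy i
  obtain ⟨a2, b2⟩ := h₂ i
  obtain ⟨a1, b1⟩ := h₁ i
  obtain ⟨c2, d2⟩ := hy i
  set h : ℕ := (j₁ - j₂).toNat with hh
  have hj1 : (2:ℝ) ^ j₁ = 2 ^ j₂ * 2 ^ h := by
    rw [← zpow_natCast (2:ℝ) h, ← zpow_add₀ (by norm_num : (2:ℝ) ≠ 0)]
    congr 1; omega
  have h2pos := zp j₂
  -- integer inequalities
  have key1 : (k₁ i) * 2 ^ h ≤ k₂ i := by
    have : (k₁ i : ℝ) * 2 ^ h * 2 ^ j₂ < (k₂ i + 1) * 2 ^ j₂ := by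
      calc (k₁ i : ℝ) * 2 ^ h * 2 ^ j₂ = (k₁ i) * 2 ^ j₁ := by rw [hj1]; ring
      _ ≤ x i := a1
      _ < (k₂ i + 1) * 2 ^ j₂ := b2
    have := (mul_lt_mul_iff_of_pos_right h2pos).1 this
    have : ((k₁ i * 2 ^ h : ℤ) : ℝ) < ((k₂ i + 1 : ℤ) : ℝ) := by push_cast; push_cast at this; linarith
    have := Int.cast_lt.1 this
    omega
  have key2 : k₂ i + 1 ≤ (k₁ i + 1) * 2 ^ h := by
    have : (k₂ i : ℝ) * 2 ^ j₂ < ((k₁ i + 1) * 2 ^ h) * 2 ^ j₂ := by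
      calc (k₂ i : ℝ) * 2 ^ j₂ ≤ x i := a2
      _ < (k₁ i + 1) * 2 ^ j₁ := b1
      _ = ((k₁ i + 1) * 2 ^ h) * 2 ^ j₂ := by rw [hj1]; ring
    have := (mul_lt_mul_iff_of_pos_right h2pos).1 this
    have : ((k₂ i : ℤ) : ℝ) < (((k₁ i + 1) * 2 ^ h : ℤ) : ℝ) := by push_cast; push_cast at this; linarith
    have := Int.cast_lt.1 this
    omega
  constructor
  · calc (k₁ i : ℝ) * 2 ^ j₁ = (k₁ i * 2 ^ h : ℤ) * 2 ^ j₂ := by push_cast; rw [hj1]; ring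
    _ ≤ (k₂ i) * 2 ^ j₂ := by
        apply mul_le_mul_of_nonneg_right _ (le_of_lt h2pos)
        exact_mod_cast Int.cast_le.2 key1
    _ ≤ y i := c2
  · calc y i < ((k₂ i : ℝ) + 1) * 2 ^ j₂ := d2
    _ ≤ ((k₁ i + 1) * 2 ^ h : ℤ) * 2 ^ j₂ := by
        apply mul_le_mul_of_nonneg_right _ (le_of_lt h2pos)
        exact_mod_cast Int.cast_le.2 key2
    _ = ((k₁ i : ℝ) + 1) * 2 ^ j₁ := by push_cast; rw [hj1]; ring

def corner (j : ℤ) (k : Fin n → ℤ) : Rn n := WithLp.toLp 2 (fun i => (k i : ℝ) * 2 ^ j)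

lemma corner_mem (j : ℤ) (k : Fin n → ℤ) : corner j k ∈ cube n j k := by
  intro i
  refine ⟨le_refl _, ?_⟩
  have := zp j
  show (k i : ℝ) * 2 ^ j < ((k i : ℝ) + 1) * 2 ^ j
  nlinarith

lemma abs_coord_le_norm (z : Rn n) (i : Fin n) : |z i| ≤ ‖z‖ := by
  rw [EuclideanSpace.norm_eq]
  rw [← Real.sqrt_sq_eq_abs]
  apply Real.sqrt_le_sqrt
  have : |z i| ^ 2 ≤ ∑ i', ‖z i'‖ ^ 2 := by
    have := Finset.single_le_sum (f := fun i' => ‖z i'‖ ^ 2)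
      (fun i' _ => by positivity) (Finset.mem_univ i)
    simpa [sq_abs] using this
  simpa [sq_abs] using this

lemma norm_sub_le_cube {j : ℤ} {k : Fin n → ℤ} {x y : Rn n}
    (hx : x ∈ cube n j k) (hy : y ∈ cube n j k) : ‖x - y‖ ≤ n * 2 ^ j := by
  rw [EuclideanSpace.norm_eq]
  have hcoord : ∀ i, ‖(x - y) i‖ ^ 2 ≤ (2 ^ j) ^ 2 := by
    intro i
    obtain ⟨a1, b1⟩ := hx i
    obtain ⟨a2, b2⟩ := hy i
    have : |(x - y) i| ≤ 2 ^ j := by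
      have : (x - y) i = x i - y i := rfl
      rw [this, abs_le]
      constructor <;> nlinarith
    calc ‖(x-y) i‖ ^ 2 = |(x-y) i| ^ 2 := by rw [Real.norm_eq_abs]
    _ ≤ (2 ^ j) ^ 2 := by nlinarith [abs_nonneg ((x-y) i)]
  calc √(∑ i, ‖(x - y) i‖ ^ 2) ≤ √(∑ _i : Fin n, ((2:ℝ) ^ j) ^ 2) := by
        apply Real.sqrt_le_sqrt; exact Finset.sum_le_sum fun i _ => hcoord i
  _ = √ ((n : ℝ) * (2 ^ j) ^ 2) := by rw [Finset.sum_const]; simp [nsmul_eq_mul]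
  _ ≤ √ ((n:ℝ)^2 * (2 ^ j) ^ 2) := by
        apply Real.sqrt_le_sqrt
        have : (n:ℝ) ≤ (n:ℝ)^2 := by
          have h := Nat.le_self_pow (two_ne_zero) n
          exact_mod_cast h
        nlinarith [sq_nonneg ((2:ℝ)^j)]
  _ = n * 2 ^ j := by
        rw [← mul_pow, Real.sqrt_sq (by positivity)]

lemma cube_subset_ball {j : ℤ} {k : Fin n → ℤ} :
    cube n j k ⊆ Metric.ball (corner j k) (((n:ℝ) + 1) * 2 ^ j) := by
  intro x hx
  rw [Metric.mem_ball, dist_eq_norm]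
  calc ‖x - corner j k‖ ≤ n * 2 ^ j := norm_sub_le_cube hx (corner_mem j k)
  _ < ((n:ℝ) + 1) * 2 ^ j := by have := zp j; nlinarith


/-- 2^y in ℝ≥0∞ -/
def E (y : ℝ) : ℝ≥0∞ := (2 : ℝ≥0∞) ^ y

lemma E_ne_zero (y : ℝ) : E y ≠ 0 := by
  simp [E, ENNReal.rpow_eq_zero_iff]
lemma E_ne_top (y : ℝ) : E y ≠ ⊤ := by
  simp [E, ENNReal.rpow_eq_top_iff]
lemma E_add (a b : ℝ) : E (a + b) = E a * E b :=
  ENNReal.rpow_add a b (by norm_num) (by norm_num)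
lemma E_zero : E 0 = 1 := by simp [E]
lemma E_cancel (a : ℝ) : E a * E (-a) = 1 := by
  rw [← E_add]; simp [E_zero]
lemma E_mono {a b : ℝ} (h : a ≤ b) : E a ≤ E b :=
  ENNReal.rpow_le_rpow_of_exponent_le (by norm_num) h
lemma E_lt_one {a : ℝ} (h : a < 0) : E a < 1 := by
  have := ENNReal.rpow_lt_rpow_of_exponent_lt (x := 2) (by norm_num) (by norm_num) h
  simpa [E, E_zero] using this
lemma E_rpow (a c : ℝ) : (E a) ^ c = E (a * c) := by
  rw [E, E, ← ENNReal.rpow_mul]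
lemma E_pow_nat (m : ℕ) : (E 1) ^ m = E m := by
  rw [← ENNReal.rpow_natCast (E 1) m, E_rpow, one_mul]

lemma ofReal_two_rpow (y : ℝ) : ENNReal.ofReal ((2:ℝ) ^ y) = E y := by
  rw [E, ← ENNReal.ofReal_rpow_of_pos (by norm_num)]
  norm_num

lemma ofReal_two_zpow (m : ℤ) : ENNReal.ofReal ((2:ℝ) ^ m) = E m := by
  rw [← Real.rpow_intCast 2 m]; exact ofReal_two_rpow _

/-- geometric series bound -/
lemma tsum_E_neg (τ : ℝ) : ∑' h : ℕ, E (-(h * τ)) = (1 - E (-τ))⁻¹ := by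
  have : ∀ h : ℕ, E (-(h * τ)) = (E (-τ)) ^ h := by
    intro h
    rw [← ENNReal.rpow_natCast (E (-τ)) h, E_rpow]
    ring_nf
  simp_rw [this]
  exact ENNReal.tsum_geometric _

lemma tsum_E_neg_ne_top (τ : ℝ) (hτ : 0 < τ) : (∑' h : ℕ, E (-(h * τ))) ≠ ⊤ := by
  rw [tsum_E_neg τ]
  rw [Ne, ENNReal.inv_eq_top, tsub_eq_zero_iff_le]
  exact fun h => absurd h (not_le.2 (E_lt_one (by linarith)))

lemma tsum_shift {f : ℕ → ℝ≥0∞} (g₀ : ℕ) (h0 : ∀ g < g₀, f g = 0) :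
    ∑' g, f g = ∑' h, f (g₀ + h) := by
  induction g₀ with
  | zero => simp
  | succ m ih =>
    rw [ih (fun g hg => h0 g (Nat.lt_succ_of_lt hg))]
    rw [tsum_eq_zero_add' ENNReal.summable]
    rw [Nat.add_zero, h0 m (Nat.lt_succ_self m), zero_add]
    apply tsum_congr; intro h
    congr 1; omega


lemma volume_cube (j : ℤ) (k : Fin n → ℤ) :
    volume (cube n j k) = E ((n : ℝ) * (j : ℝ)) := by
  have hequiv : cube n j k = ((MeasurableEquiv.toLp 2 (Fin n → ℝ)).symm) ⁻¹'
      (Set.univ.pi fun i => Set.Ico ((k i : ℝ) * 2 ^ j) (((k i : ℝ) + 1) * 2 ^ j)) := by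
    ext x
    simp [cube, MeasurableEquiv.coe_toLp_symm, Set.mem_pi, Set.mem_Ico]
  rw [hequiv]
  rw [(EuclideanSpace.volume_preserving_symm_measurableEquiv_toLp (Fin n)).measure_preimage
    ((MeasurableSet.univ_pi fun i => measurableSet_Ico).nullMeasurableSet)]
  rw [volume_pi_pi]
  have h1 : ∀ i : Fin n, volume (Set.Ico ((k i : ℝ) * 2 ^ j) (((k i : ℝ) + 1) * 2 ^ j))
      = E (j : ℝ) := by
    intro i
    rw [Real.volume_Ico, ← ofReal_two_zpow]
    congr 1; ring
  simp_rw [h1]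
  rw [Finset.prod_const, Finset.card_univ, Fintype.card_fin,
    ← ENNReal.rpow_natCast (E (j:ℝ)) n, E_rpow, mul_comm]

variable {n : ℕ} {α p : ℝ} {w : Rn n → ℝ}

def W (w : Rn n → ℝ) : Rn n → ℝ≥0∞ := fun y => ENNReal.ofReal (w y)

lemma lintegral_mono_set' {μ : Measure (Rn n)} {s t : Set (Rn n)} (hst : s ⊆ t)
    (f : Rn n → ℝ≥0∞) : ∫⁻ x in s, f x ∂μ ≤ ∫⁻ x in t, f x ∂μ :=
  lintegral_mono' (Measure.restrict_mono hst le_rfl) le_rfl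

/-- Hölder: mass against p-energy on a set. -/
lemma holder_mass (hwm : Measurable w) (hp : 1 < p) {s : Set (Rn n)} :
    ∫⁻ x in s, W w x ≤ (∫⁻ x in s, W w x ^ p) ^ (1/p) * (volume s) ^ (1 - 1/p) := by
  have hpq : p.HolderConjugate (p/(p-1)) := by
    exact Real.HolderConjugate.conjExponent hp
  have h := ENNReal.lintegral_mul_le_Lp_mul_Lq (volume.restrict s) hpq
    (f := W w) (g := fun _ => 1)
    (hwm.ennreal_ofReal.aemeasurable) aemeasurable_const
  simp only [Pi.mul_apply, mul_one, ENNReal.one_rpow] at h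
  have h2 : ∫⁻ _x in s, (1:ℝ≥0∞) = volume s := by
    rw [setLIntegral_const, one_mul]
  have h3 : 1/(p/(p-1)) = 1 - 1/p := by field_simp
  rw [h2, h3] at h
  exact h

def Bc (n : ℕ) (α p : ℝ) (A : ℝ≥0∞) : ℝ≥0∞ :=
  A ^ p * (ENNReal.ofReal ((n:ℝ)+1)) ^ ((n:ℝ) - α*p)
def Dc (n : ℕ) (α p : ℝ) (A : ℝ≥0∞) : ℝ≥0∞ := (Bc n α p A) ^ (1/p)

lemma ofRealn1_ne_zero : (ENNReal.ofReal ((n:ℝ)+1)) ≠ 0 := by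
  simp only [Ne, ENNReal.ofReal_eq_zero, not_le]
  positivity

lemma Bc_ne_zero {A : ℝ≥0∞} (hA0 : A ≠ 0) (hAt : A ≠ ⊤) : Bc n α p A ≠ 0 := by
  unfold Bc
  apply mul_ne_zero
  · simp only [Ne, ENNReal.rpow_eq_zero_iff]
    rintro (⟨h, _⟩ | ⟨h, _⟩)
    exacts [hA0 h, hAt h]
  · simp only [Ne, ENNReal.rpow_eq_zero_iff]
    rintro (⟨h, _⟩ | ⟨h, _⟩)
    exacts [ofRealn1_ne_zero h, ENNReal.ofReal_ne_top h]

lemma Bc_ne_top {A : ℝ≥0∞} (hA0 : A ≠ 0) (hAt : A ≠ ⊤) : Bc n α p A ≠ ⊤ := by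
  unfold Bc
  apply ENNReal.mul_ne_top
  · simp only [Ne, ENNReal.rpow_eq_top_iff]
    rintro (⟨h, _⟩ | ⟨h, _⟩)
    exacts [hA0 h, hAt h]
  · simp only [Ne, ENNReal.rpow_eq_top_iff]
    rintro (⟨h, _⟩ | ⟨h, _⟩)
    exacts [ofRealn1_ne_zero h, ENNReal.ofReal_ne_top h]

lemma Dc_ne_zero {A : ℝ≥0∞} (hA0 : A ≠ 0) (hAt : A ≠ ⊤) : Dc n α p A ≠ 0 := by
  unfold Dc
  simp only [Ne, ENNReal.rpow_eq_zero_iff]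
  rintro (⟨h, _⟩ | ⟨h, _⟩)
  exacts [Bc_ne_zero hA0 hAt h, Bc_ne_top hA0 hAt h]

lemma Dc_ne_top {A : ℝ≥0∞} (hA0 : A ≠ 0) (hAt : A ≠ ⊤) : Dc n α p A ≠ ⊤ := by
  unfold Dc
  simp only [Ne, ENNReal.rpow_eq_top_iff]
  rintro (⟨h, _⟩ | ⟨h, _⟩)
  exacts [Bc_ne_zero hA0 hAt h, Bc_ne_top hA0 hAt h]

lemma Dc_pow (hp : 1 < p) {A : ℝ≥0∞} : (Dc n α p A) ^ p = Bc n α p A := by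
  unfold Dc
  rw [← ENNReal.rpow_mul]
  have : 1/p * p = 1 := by field_simp
  rw [this, ENNReal.rpow_one]

/-- p-energy bound on cubes -/
lemma cube_p_bound {A : ℝ≥0∞}
    (hball : ∀ (x : Rn n) (r : ℝ), 0 < r →
      ∫⁻ y in Metric.ball x r, W w y ^ p ≤ A ^ p * (ENNReal.ofReal r) ^ ((n:ℝ) - α * p))
    (j' : ℤ) (t : Fin n → ℤ) :
    ∫⁻ x in cube n j' t, W w x ^ p ≤ Bc n α p A * E ((j' : ℝ) * ((n:ℝ) - α*p)) := by
  have h1 : ∫⁻ x in cube n j' t, W w x ^ p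
      ≤ ∫⁻ x in Metric.ball (corner j' t) (((n:ℝ)+1) * 2 ^ j'), W w x ^ p :=
    lintegral_mono_set' cube_subset_ball _
  have hr : (0:ℝ) < ((n:ℝ)+1) * 2 ^ j' := by positivity
  have h2 := hball (corner j' t) _ hr
  have h3 : (ENNReal.ofReal (((n:ℝ)+1) * 2 ^ j')) ^ ((n:ℝ) - α*p)
      = (ENNReal.ofReal ((n:ℝ)+1)) ^ ((n:ℝ) - α*p) * E ((j':ℝ) * ((n:ℝ) - α*p)) := by
    rw [ENNReal.ofReal_mul (by positivity), ENNReal.mul_rpow_of_ne_top ENNReal.ofReal_ne_top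
      ENNReal.ofReal_ne_top, ofReal_two_zpow, E_rpow]
  calc ∫⁻ x in cube n j' t, W w x ^ p ≤ _ := h1
  _ ≤ A ^ p * (ENNReal.ofReal (((n:ℝ)+1) * 2 ^ j')) ^ ((n:ℝ) - α*p) := h2
  _ = Bc n α p A * E ((j':ℝ) * ((n:ℝ) - α*p)) := by
      rw [h3, Bc, mul_assoc]

/-- mass bound on subsets of cubes -/
lemma mass_bound (hα : 0 < α) (hp : 1 < p) (hαp : α * p ≤ n) (hwm : Measurable w)
    {A : ℝ≥0∞}
    (hball : ∀ (x : Rn n) (r : ℝ), 0 < r →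
      ∫⁻ y in Metric.ball x r, W w y ^ p ≤ A ^ p * (ENNReal.ofReal r) ^ ((n:ℝ) - α * p))
    (j' : ℤ) (t : Fin n → ℤ) {s : Set (Rn n)} (hs : s ⊆ cube n j' t) :
    ∫⁻ x in s, W w x ≤ Dc n α p A * E ((j' : ℝ) * ((n:ℝ) - α)) := by
  have h0 := holder_mass hwm hp (s := s)
  have h1 : (∫⁻ x in s, W w x ^ p) ≤ Bc n α p A * E ((j' : ℝ) * ((n:ℝ) - α*p)) :=
    le_trans (lintegral_mono_set' hs _) (cube_p_bound hball j' t)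
  have h2 : volume s ≤ E ((n:ℝ) * (j':ℝ)) := by
    rw [← volume_cube j' t]; exact measure_mono hs
  have hp0 : (0:ℝ) ≤ 1/p := by positivity
  have hp1 : (0:ℝ) ≤ 1 - 1/p := by
    have : 1/p < 1 := by rw [div_lt_one (by linarith)]; linarith
    linarith
  have hexp : (j':ℝ) * ((n:ℝ) - α*p) * (1/p) + (n:ℝ) * (j':ℝ) * (1 - 1/p)
      = (j':ℝ) * ((n:ℝ) - α) := by
    field_simp
    ring
  calc ∫⁻ x in s, W w x ≤ (∫⁻ x in s, W w x ^ p) ^ (1/p) * (volume s) ^ (1 - 1/p) := h0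
  _ ≤ (Bc n α p A * E ((j' : ℝ) * ((n:ℝ) - α*p))) ^ (1/p) * (E ((n:ℝ) * (j':ℝ))) ^ (1 - 1/p) :=
      mul_le_mul' (ENNReal.rpow_le_rpow h1 hp0) (ENNReal.rpow_le_rpow h2 hp1)
  _ = Dc n α p A * E ((j' : ℝ) * ((n:ℝ) - α)) := by
      rw [ENNReal.mul_rpow_of_nonneg _ _ hp0, E_rpow, E_rpow, Dc, mul_assoc, ← E_add, hexp]

/-- reverse Hölder -/
lemma rev_holder (hp : 1 < p) (hwm : Measurable w) {j' : ℤ} {s : Set (Rn n)}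
    (hvol : volume s ≤ E ((n:ℝ) * (j':ℝ))) :
    (∫⁻ x in s, W w x) ^ p ≤ (∫⁻ x in s, W w x ^ p) * E ((j':ℝ) * (n:ℝ) * (p - 1)) := by
  have h0 := holder_mass hwm hp (s := s)
  have hp0 : (0:ℝ) ≤ p := by linarith
  have h1 := ENNReal.rpow_le_rpow h0 hp0
  have hpne : p ≠ 0 := by linarith
  have hexp0 : (1 - 1/p) * p = p - 1 := by
    rw [sub_mul, one_mul, one_div, inv_mul_cancel₀ hpne]
  have hexp1 : (1/p) * p = 1 := by rw [one_div, inv_mul_cancel₀ hpne]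
  have hexp2 : (n:ℝ) * (j':ℝ) * ((1 - 1/p) * p) = (j':ℝ) * (n:ℝ) * (p - 1) := by
    rw [hexp0]; ring
  calc (∫⁻ x in s, W w x) ^ p
      ≤ ((∫⁻ x in s, W w x ^ p) ^ (1/p) * (volume s) ^ (1 - 1/p)) ^ p := h1
  _ = (∫⁻ x in s, W w x ^ p) * (volume s) ^ ((1 - 1/p)*p) := by
      rw [ENNReal.mul_rpow_of_nonneg _ _ hp0, ← ENNReal.rpow_mul, ← ENNReal.rpow_mul,
        hexp1, ENNReal.rpow_one]
  _ ≤ (∫⁻ x in s, W w x ^ p) * E ((j':ℝ) * (n:ℝ) * (p - 1)) := by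
      apply mul_le_mul_right
      have h2 : (0:ℝ) ≤ (1 - 1/p) * p := by
        have : 1/p ≤ 1 := by rw [div_le_one (by linarith)]; linarith
        nlinarith
      calc (volume s) ^ ((1 - 1/p)*p) ≤ (E ((n:ℝ) * (j':ℝ))) ^ ((1-1/p)*p) :=
            ENNReal.rpow_le_rpow hvol h2
      _ = E ((j':ℝ) * (n:ℝ) * (p - 1)) := by rw [E_rpow, hexp2]


def ch (P : Prop) : ℝ≥0∞ := if P then 1 else 0
lemma ch_true {P : Prop} (h : P) : ch P = 1 := if_pos h
lemma ch_false {P : Prop} (h : ¬ P) : ch P = 0 := if_neg h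

section Layer

variable {n : ℕ} {α p : ℝ} {w : Rn n → ℝ} {A : ℝ≥0∞}

/-- the piece of `Q = cube n j k` at generation `g`, index `t` -/
def piece (n : ℕ) (j : ℤ) (k : Fin n → ℤ) (g : ℕ) (t : Fin n → ℤ) : Set (Rn n) :=
  cube n j k ∩ cube n (j - g) t

def asub (w : Rn n → ℝ) (j : ℤ) (k : Fin n → ℤ) (σ : ℕ × (Fin n → ℤ)) : ℝ≥0∞ :=
  ∫⁻ x in piece n j k σ.1 σ.2, W w x

/-- level of generation g as a real exponent -/
def lv (j : ℤ) (g : ℕ) : ℝ := (j : ℝ) - g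

lemma lv_cast (j : ℤ) (g : ℕ) : ((j - (g:ℕ) : ℤ) : ℝ) = lv j g := by
  push_cast [lv]; ring

lemma piece_measurable {j k} (g) (t) : MeasurableSet (piece n j k g t) :=
  measurableSet_cube.inter measurableSet_cube

lemma piece_subset_cube {j k g t} : piece n j k g t ⊆ cube n (j - (g:ℕ)) t :=
  Set.inter_subset_right

lemma volume_piece_le {j : ℤ} {k : Fin n → ℤ} {g t} :
    volume (piece n j k g t) ≤ E ((n:ℝ) * lv j g) := by
  rw [← lv_cast, ← volume_cube (j - (g:ℕ)) t]
  exact measure_mono piece_subset_cube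

lemma asub_le (hα : 0 < α) (hp : 1 < p) (hαp : α * p ≤ n) (hwm : Measurable w)
    (hball : ∀ (x : Rn n) (r : ℝ), 0 < r →
      ∫⁻ y in Metric.ball x r, W w y ^ p ≤ A ^ p * (ENNReal.ofReal r) ^ ((n:ℝ) - α * p))
    (j : ℤ) (k : Fin n → ℤ) (σ : ℕ × (Fin n → ℤ)) :
    asub w j k σ ≤ Dc n α p A * E (lv j σ.1 * ((n:ℝ) - α)) := by
  rw [← lv_cast]
  exact mass_bound hα hp hαp hwm hball _ σ.2 piece_subset_cube

lemma asub_ne_top (hα : 0 < α) (hp : 1 < p) (hαp : α * p ≤ n) (hwm : Measurable w)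
    (hA0 : A ≠ 0) (hAt : A ≠ ⊤)
    (hball : ∀ (x : Rn n) (r : ℝ), 0 < r →
      ∫⁻ y in Metric.ball x r, W w y ^ p ≤ A ^ p * (ENNReal.ofReal r) ^ ((n:ℝ) - α * p))
    (j : ℤ) (k : Fin n → ℤ) (σ : ℕ × (Fin n → ℤ)) : asub w j k σ ≠ ⊤ := by
  apply ne_top_of_le_ne_top _ (asub_le hα hp hαp hwm hball j k σ)
  exact ENNReal.mul_ne_top (Dc_ne_top hA0 hAt) (E_ne_top _)

/-- layer membership -/
def Lmem (w : Rn n → ℝ) (α p : ℝ) (A : ℝ≥0∞) (j : ℤ) (k : Fin n → ℤ)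
    (i : ℕ) (σ : ℕ × (Fin n → ℤ)) : Prop :=
  Dc n α p A * E (lv j σ.1 * ((n:ℝ) - α)) * E (-((i:ℝ)+1)) < asub w j k σ ∧
  asub w j k σ ≤ Dc n α p A * E (lv j σ.1 * ((n:ℝ) - α)) * E (-(i:ℝ))

lemma exists_layer (hα : 0 < α) (hp : 1 < p) (hαp : α * p ≤ n) (hwm : Measurable w)
    (hA0 : A ≠ 0) (hAt : A ≠ ⊤)
    (hball : ∀ (x : Rn n) (r : ℝ), 0 < r →
      ∫⁻ y in Metric.ball x r, W w y ^ p ≤ A ^ p * (ENNReal.ofReal r) ^ ((n:ℝ) - α * p))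
    (j : ℤ) (k : Fin n → ℤ) (σ : ℕ × (Fin n → ℤ)) (h0 : asub w j k σ ≠ 0) :
    ∃ i : ℕ, Lmem w α p A j k i σ := by
  set a := asub w j k σ with ha
  set X := Dc n α p A * E (lv j σ.1 * ((n:ℝ) - α)) with hX
  have hXtop : X ≠ ⊤ := ENNReal.mul_ne_top (Dc_ne_top hA0 hAt) (E_ne_top _)
  have hX0 : X ≠ 0 := mul_ne_zero (Dc_ne_zero hA0 hAt) (E_ne_zero _)
  have hglob : a ≤ X := asub_le hα hp hαp hwm hball j k σ
  have hex : ∃ m : ℕ, X * E (-((m:ℝ)+1)) < a := by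
    have hr : a / X ≠ 0 := by
      simp only [Ne, ENNReal.div_eq_zero_iff]
      push_neg
      exact ⟨h0, hXtop⟩
    obtain ⟨m, hm⟩ := ENNReal.exists_inv_two_pow_lt hr
    refine ⟨m, ?_⟩
    have h2 : E (-((m:ℝ)+1)) ≤ 2⁻¹ ^ m := by
      have e1 : (2⁻¹ : ℝ≥0∞) ^ m = E (-(m:ℝ)) := by
        rw [← ENNReal.inv_pow, ← ENNReal.rpow_natCast 2 m]
        rw [show ((2:ℝ≥0∞) ^ ((m:ℕ):ℝ))⁻¹ = E (-(m:ℝ)) by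
          rw [← ENNReal.rpow_neg]; rfl]
      rw [e1]
      exact E_mono (by linarith [Nat.cast_nonneg (α := ℝ) m])
    calc X * E (-((m:ℝ)+1)) ≤ X * 2⁻¹ ^ m := mul_le_mul_right h2 X
    _ < X * (a / X) := by
        rw [ENNReal.mul_lt_mul_iff_right hX0 hXtop]
        exact hm
    _ = a := ENNReal.mul_div_cancel hX0 hXtop
  refine ⟨Nat.find hex, Nat.find_spec hex, ?_⟩
  rcases Nat.eq_zero_or_pos (Nat.find hex) with h | h
  · rw [h]
    simpa [E_zero] using hglob
  · obtain ⟨m, hm⟩ := Nat.exists_eq_succ_of_ne_zero (Nat.pos_iff_ne_zero.1 h)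
    have := Nat.find_min hex (m := m) (by omega)
    rw [not_lt] at this
    rw [hm]
    convert this using 3
    · rfl
    push_cast [Nat.cast_succ]
    ring

/-- ancestor index of σ at generation g' -/
def anc (j : ℤ) (g' : ℕ) (σ : ℕ × (Fin n → ℤ)) : Fin n → ℤ :=
  idx (j - g') (corner (j - σ.1) σ.2)

lemma anc_self (j : ℤ) (σ : ℕ × (Fin n → ℤ)) : anc j σ.1 σ = σ.2 := by
  funext i
  exact mem_cube.1 (corner_mem (j - σ.1) σ.2) i

lemma cube_sub_anc (j : ℤ) {g' : ℕ} {σ : ℕ × (Fin n → ℤ)} (hg : g' ≤ σ.1) :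
    cube n (j - σ.1) σ.2 ⊆ cube n (j - g') (anc j g' σ) := by
  apply cube_subset (by omega : j - (σ.1:ℕ) ≤ j - (g':ℕ)) (corner_mem _ _)
  exact mem_cube_idx _ _

lemma anc_trans (j : ℤ) {g'' g' : ℕ} {σ : ℕ × (Fin n → ℤ)} (h1 : g'' ≤ g') (h2 : g' ≤ σ.1) :
    anc j g'' (g', anc j g' σ) = anc j g'' σ := by
  have hsub : cube n (j - g') (anc j g' σ) ⊆ cube n (j - g'') (anc j g'' σ) := by
    apply cube_subset (by omega : j - (g':ℕ) ≤ j - (g'':ℕ))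
    · exact cube_sub_anc j h2 (corner_mem _ _)
    · exact cube_sub_anc j (le_trans h1 h2) (corner_mem _ _)
  have hc2 : corner (j - g') (anc j g' σ) ∈ cube n (j - g'') (anc j g'' σ) :=
    hsub (corner_mem _ _)
  funext i
  exact (mem_cube.1 hc2 i)

/-- maximality -/
def Mx (w : Rn n → ℝ) (α p : ℝ) (A : ℝ≥0∞) (j : ℤ) (k : Fin n → ℤ)
    (i : ℕ) (σ₀ : ℕ × (Fin n → ℤ)) : Prop :=
  Lmem w α p A j k i σ₀ ∧ ∀ g'' < σ₀.1, ¬ Lmem w α p A j k i (g'', anc j g'' σ₀)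

def phi (w : Rn n → ℝ) (α p : ℝ) (A : ℝ≥0∞) (j : ℤ) (k : Fin n → ℤ)
    (i : ℕ) (σ : ℕ × (Fin n → ℤ)) : ℕ × (Fin n → ℤ) :=
  if h : ∃ g', g' ≤ σ.1 ∧ Lmem w α p A j k i (g', anc j g' σ) then
    (Nat.find h, anc j (Nat.find h) σ) else σ

lemma phi_spec {j : ℤ} {k : Fin n → ℤ} {i : ℕ} {σ : ℕ × (Fin n → ℤ)}
    (hσ : Lmem w α p A j k i σ) :
    Mx w α p A j k i (phi w α p A j k i σ) ∧ (phi w α p A j k i σ).1 ≤ σ.1 ∧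
      (phi w α p A j k i σ).2 = anc j (phi w α p A j k i σ).1 σ := by
  have hex : ∃ g', g' ≤ σ.1 ∧ Lmem w α p A j k i (g', anc j g' σ) := by
    refine ⟨σ.1, le_rfl, ?_⟩
    rw [anc_self]
    simpa using hσ
  rw [phi, dif_pos hex]
  obtain ⟨hle, hL⟩ := Nat.find_spec hex
  refine ⟨⟨hL, ?_⟩, hle, rfl⟩
  intro g'' hg'' hcon
  have htrans : anc j g'' (Nat.find hex, anc j (Nat.find hex) σ) = anc j g'' σ :=
    anc_trans j (le_of_lt hg'') hle
  rw [htrans] at hcon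
  exact Nat.find_min hex hg'' ⟨by omega, hcon⟩

lemma phi_sub {j : ℤ} {k : Fin n → ℤ} {i : ℕ} {σ : ℕ × (Fin n → ℤ)}
    (hσ : Lmem w α p A j k i σ) :
    cube n (j - σ.1) σ.2 ⊆
      cube n (j - (phi w α p A j k i σ).1) (phi w α p A j k i σ).2 := by
  obtain ⟨_, hle, heq⟩ := phi_spec hσ
  rw [heq]
  exact cube_sub_anc j hle

/-- maximal cubes at most intersect if equal -/
lemma Mx_disjoint {j : ℤ} {k : Fin n → ℤ} {i : ℕ} {σ₀ σ₁ : ℕ × (Fin n → ℤ)}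
    (h₀ : Mx w α p A j k i σ₀) (h₁ : Mx w α p A j k i σ₁) (hne : σ₀ ≠ σ₁) :
    Disjoint (cube n (j - σ₀.1) σ₀.2) (cube n (j - σ₁.1) σ₁.2) := by
  have aux : ∀ σa σb : ℕ × (Fin n → ℤ), Mx w α p A j k i σa → Mx w α p A j k i σb →
      σa.1 < σb.1 →
      Disjoint (cube n (j - σa.1) σa.2) (cube n (j - σb.1) σb.2) := by
    intro σa σb ha hb hlt
    by_contra hnd
    obtain ⟨x, hxa, hxb⟩ := Set.not_disjoint_iff.1 hnd
    have hsub : cube n (j - σb.1) σb.2 ⊆ cube n (j - σa.1) σa.2 :=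
      cube_subset (by omega : j - (σb.1:ℕ) ≤ j - (σa.1:ℕ)) hxb hxa
    have hanc : anc j σa.1 σb = σa.2 := by
      funext i'
      exact mem_cube.1 (hsub (corner_mem (j - σb.1) σb.2)) i'
    have hcon := hb.2 σa.1 hlt
    rw [hanc] at hcon
    exact hcon ha.1
  rcases lt_trichotomy σ₀.1 σ₁.1 with h | h | h
  · exact aux σ₀ σ₁ h₀ h₁ h
  · have h2 : σ₀.2 ≠ σ₁.2 := by
      intro he
      exact hne (Prod.ext h he)
    rw [h]
    exact cube_disjoint h2
  · exact (aux σ₁ σ₀ h₁ h₀ h).symm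


/-- generic disjoint-sum comparison -/
lemma tsum_restrict_le {ι : Type} [Countable ι] (cond : ι → Prop) (s : ι → Set (Rn n))
    (S : Set (Rn n)) (hm : ∀ i', MeasurableSet (s i'))
    (hd : ∀ i₁ i₂, i₁ ≠ i₂ → cond i₁ → cond i₂ → Disjoint (s i₁) (s i₂))
    (hsub : ∀ i', cond i' → s i' ⊆ S) (f : Rn n → ℝ≥0∞) :
    ∑' i', ch (cond i') * ∫⁻ x in s i', f x ≤ ∫⁻ x in S, f x := by
  set s' : ι → Set (Rn n) := fun i' => if cond i' then s i' else ∅ with hs'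
  have each : ∀ i', ch (cond i') * ∫⁻ x in s i', f x = ∫⁻ x in s' i', f x := by
    intro i'; by_cases h : cond i'
    · simp [ch, s', h]
    · simp [ch, s', h]
  calc ∑' i', ch (cond i') * ∫⁻ x in s i', f x = ∑' i', ∫⁻ x in s' i', f x :=
        tsum_congr each
  _ = ∫⁻ x in ⋃ i', s' i', f x := by
      rw [lintegral_iUnion]
      · intro i'; by_cases h : cond i' <;> simp [s', h, hm i']
      · intro i₁ i₂ hne
        simp only [Function.onFun, s']
        by_cases h1 : cond i₁ <;> by_cases h2 : cond i₂ <;> simp [h1, h2]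
        exact hd i₁ i₂ hne h1 h2
  _ ≤ ∫⁻ x in S, f x := by
      apply lintegral_mono_set' (Set.iUnion_subset fun i' => ?_)
      by_cases h : cond i' <;> simp [s', h]
      exact hsub i' h

lemma lintegral_Q_tsum (j : ℤ) (k : Fin n → ℤ) (g : ℕ) (f : Rn n → ℝ≥0∞) :
    ∫⁻ x in cube n j k, f x = ∑' t : Fin n → ℤ, ∫⁻ x in piece n j k g t, f x := by
  have hU : cube n j k = ⋃ t : Fin n → ℤ, piece n j k g t := by
    ext x
    constructor
    · intro hx
      exact Set.mem_iUnion.2 ⟨idx (j - g) x, hx, mem_cube_idx _ x⟩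
    · intro hx
      obtain ⟨t, ht, -⟩ := Set.mem_iUnion.1 hx
      exact ht
  rw [hU, lintegral_iUnion (fun t => piece_measurable _ _)]
  intro t t' hne
  exact ((cube_disjoint hne).mono Set.inter_subset_right Set.inter_subset_right)

lemma Mx_sum_le (j : ℤ) (k : Fin n → ℤ) (i : ℕ) :
    ∑' σ₀ : ℕ × (Fin n → ℤ), ch (Mx w α p A j k i σ₀) * asub w j k σ₀
      ≤ ∫⁻ x in cube n j k, W w x := by
  have ha : ∀ σ₀ : ℕ × (Fin n → ℤ), asub w j k σ₀ = ∫⁻ x in piece n j k σ₀.1 σ₀.2, W w x :=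
    fun _ => rfl
  simp only [ha]
  exact tsum_restrict_le (fun σ₀ => Mx w α p A j k i σ₀)
    (fun σ₀ => piece n j k σ₀.1 σ₀.2) (cube n j k)
    (fun σ => piece_measurable σ.1 σ.2)
    (fun σ₁ σ₂ hne h1 h2 => (Mx_disjoint h1 h2 hne).mono
      Set.inter_subset_right Set.inter_subset_right)
    (fun σ _hc => Set.inter_subset_left) (W w)

def mubar (w : Rn n → ℝ) (α p : ℝ) (A : ℝ≥0∞) (j : ℤ) (k : Fin n → ℤ)
    (i : ℕ) (σ₀ : ℕ × (Fin n → ℤ)) (g : ℕ) : ℝ≥0∞ :=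
  ∑' t : Fin n → ℤ, ch (Lmem w α p A j k i (g, t) ∧ phi w α p A j k i (g, t) = σ₀)
    * asub w j k (g, t)

lemma mu_zero {j : ℤ} {k : Fin n → ℤ} {i : ℕ} {σ₀ : ℕ × (Fin n → ℤ)} {g : ℕ}
    (hg : g < σ₀.1) : mubar w α p A j k i σ₀ g = 0 := by
  unfold mubar
  have hz : ∀ t : Fin n → ℤ,
      ch (Lmem w α p A j k i (g, t) ∧ phi w α p A j k i (g, t) = σ₀)
        * asub w j k (g, t) = 0 := by
    intro t
    rcases em (Lmem w α p A j k i (g, t) ∧ phi w α p A j k i (g, t) = σ₀) with h | h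
    · exfalso
      obtain ⟨hL, hphi⟩ := h
      have hle := (phi_spec hL).2.1
      rw [hphi] at hle
      exact absurd hle (by omega)
    · rw [ch_false h, zero_mul]
  rw [tsum_congr hz, tsum_zero]

lemma mu_base {j : ℤ} {k : Fin n → ℤ} {i : ℕ} {σ₀ : ℕ × (Fin n → ℤ)} (g : ℕ) :
    mubar w α p A j k i σ₀ g ≤ asub w j k σ₀ := by
  unfold mubar
  have ha : ∀ t, asub w j k (g, t) = ∫⁻ x in piece n j k g t, W w x := fun _ => rfl
  simp only [ha]
  apply tsum_restrict_le
    (fun t => Lmem w α p A j k i (g, t) ∧ phi w α p A j k i (g, t) = σ₀)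
    (fun t => piece n j k g t) (piece n j k σ₀.1 σ₀.2)
    (fun t => piece_measurable _ _)
    (fun t₁ t₂ hne _ _ => (cube_disjoint hne).mono
      Set.inter_subset_right Set.inter_subset_right)
    (fun t hc => ?_) (W w)
  obtain ⟨hL, hphi⟩ := hc
  have hsub := phi_sub hL
  rw [hphi] at hsub
  exact Set.inter_subset_inter (le_refl _) hsub

lemma mu_decay (hα : 0 < α) (hp : 1 < p) (hαp : α * p ≤ (n:ℝ)) (hwm : Measurable w)
    (hA0 : A ≠ 0) (hAt : A ≠ ⊤)
    (hball : ∀ (x : Rn n) (r : ℝ), 0 < r →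
      ∫⁻ y in Metric.ball x r, W w y ^ p ≤ A ^ p * (ENNReal.ofReal r) ^ ((n:ℝ) - α * p))
    {j : ℤ} {k : Fin n → ℤ} {i : ℕ} {σ₀ : ℕ × (Fin n → ℤ)}
    (hMx : Mx w α p A j k i σ₀) (h : ℕ) :
    mubar w α p A j k i σ₀ (σ₀.1 + h) ≤
      E (p * ((i:ℝ)+1) - h * (α*(p-1))) * asub w j k σ₀ := by
  set g := σ₀.1 + h with hg
  set Z := Dc n α p A * E (lv j g * ((n:ℝ) - α)) * E (-((i:ℝ)+1)) with hZ
  have hZ0 : Z ≠ 0 := mul_ne_zero (mul_ne_zero (Dc_ne_zero hA0 hAt) (E_ne_zero _)) (E_ne_zero _)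
  have hZt : Z ≠ ⊤ :=
    ENNReal.mul_ne_top (ENNReal.mul_ne_top (Dc_ne_top hA0 hAt) (E_ne_top _)) (E_ne_top _)
  have hp1 : (0:ℝ) ≤ p - 1 := by linarith
  -- step A : pointwise bound
  have stepA : ∀ t : Fin n → ℤ, Lmem w α p A j k i (g, t) →
      asub w j k (g, t) ≤ (Z ^ (1 - p) * E (lv j g * (n:ℝ) * (p - 1))) *
        ∫⁻ x in piece n j k g t, W w x ^ p := by
    intro t hL
    set a := asub w j k (g, t) with ha
    have hZa : Z < a := hL.1
    have ha0 : a ≠ 0 := by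
      intro h0
      rw [h0] at hZa
      exact absurd hZa (by simp)
    have hat : a ≠ ⊤ := asub_ne_top hα hp hαp hwm hA0 hAt hball j k (g, t)
    have hrev : a ^ p ≤ (∫⁻ x in piece n j k g t, W w x ^ p)
        * E (lv j g * (n:ℝ) * (p - 1)) := by
      have hvol : volume (piece n j k g t) ≤ E ((n:ℝ) * ((j - (g:ℕ) : ℤ) : ℝ)) := by
        rw [lv_cast]
        exact volume_piece_le
      have := rev_holder hp hwm (j' := j - (g:ℕ)) (s := piece n j k g t) hvol
      rw [lv_cast] at this
      exact this
    have key : Z ^ (p-1) * a ≤ (∫⁻ x in piece n j k g t, W w x ^ p)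
        * E (lv j g * (n:ℝ) * (p - 1)) := by
      refine le_trans ?_ hrev
      have e1 : a ^ p = a ^ (p-1) * a := by
        nth_rewrite 3 [← ENNReal.rpow_one a]
        rw [← ENNReal.rpow_add _ _ ha0 hat]
        congr 1
        ring
      rw [e1]
      exact mul_le_mul_left (ENNReal.rpow_le_rpow (le_of_lt hZa) hp1) a
    have cancel : Z ^ (1-p) * (Z ^ (p-1) * a) = a := by
      rw [← mul_assoc, ← ENNReal.rpow_add _ _ hZ0 hZt]
      norm_num
    calc a = Z ^ (1-p) * (Z ^ (p-1) * a) := cancel.symm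
    _ ≤ Z ^ (1-p) * ((∫⁻ x in piece n j k g t, W w x ^ p)
        * E (lv j g * (n:ℝ) * (p - 1))) := mul_le_mul_right key _
    _ = (Z ^ (1 - p) * E (lv j g * (n:ℝ) * (p - 1))) *
        ∫⁻ x in piece n j k g t, W w x ^ p := by ring
  -- step B : sum over the fiber
  set c := Z ^ (1 - p) * E (lv j g * (n:ℝ) * (p - 1)) with hc
  have stepB : mubar w α p A j k i σ₀ g ≤
      c * (Bc n α p A * E (lv j σ₀.1 * ((n:ℝ) - α*p))) := by
    unfold mubar
    calc ∑' t : Fin n → ℤ, ch (Lmem w α p A j k i (g, t) ∧ phi w α p A j k i (g, t) = σ₀)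
        * asub w j k (g, t)
        ≤ ∑' t : Fin n → ℤ, c * (ch (Lmem w α p A j k i (g, t) ∧
            phi w α p A j k i (g, t) = σ₀) * ∫⁻ x in piece n j k g t, W w x ^ p) := by
          apply ENNReal.tsum_le_tsum
          intro t
          rcases em (Lmem w α p A j k i (g, t) ∧ phi w α p A j k i (g, t) = σ₀) with hcond | hcond
          · simp only [ch_true hcond, one_mul]
            exact stepA t hcond.1
          · rw [ch_false hcond, zero_mul, zero_mul, mul_zero]
    _ = c * ∑' t : Fin n → ℤ, ch (Lmem w α p A j k i (g, t) ∧
            phi w α p A j k i (g, t) = σ₀) * ∫⁻ x in piece n j k g t, W w x ^ p :=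
          ENNReal.tsum_mul_left
    _ ≤ c * ∫⁻ x in piece n j k σ₀.1 σ₀.2, W w x ^ p := by
          apply mul_le_mul_right
          apply tsum_restrict_le
            (fun t => Lmem w α p A j k i (g, t) ∧ phi w α p A j k i (g, t) = σ₀)
            (fun t => piece n j k g t) (piece n j k σ₀.1 σ₀.2)
            (fun t => piece_measurable _ _)
            (fun t₁ t₂ hne _ _ => (cube_disjoint hne).mono
              Set.inter_subset_right Set.inter_subset_right)
            (fun t hcond => ?_) (fun x => W w x ^ p)
          obtain ⟨hL, hphi⟩ := hcond
          have hsub := phi_sub hL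
          rw [hphi] at hsub
          exact Set.inter_subset_inter (le_refl _) hsub
    _ ≤ c * (Bc n α p A * E (lv j σ₀.1 * ((n:ℝ) - α*p))) := by
          apply mul_le_mul_right
          calc ∫⁻ x in piece n j k σ₀.1 σ₀.2, W w x ^ p
              ≤ ∫⁻ x in cube n (j - (σ₀.1:ℕ)) σ₀.2, W w x ^ p :=
                lintegral_mono_set' piece_subset_cube _
          _ ≤ Bc n α p A * E (lv j σ₀.1 * ((n:ℝ) - α*p)) := by
                have := cube_p_bound hball (j - (σ₀.1:ℕ)) σ₀.2
                rw [lv_cast] at this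
                exact this
  -- step C : algebra
  have hD0 : Dc n α p A ≠ 0 := Dc_ne_zero hA0 hAt
  have hDt : Dc n α p A ≠ ⊤ := Dc_ne_top hA0 hAt
  have hlv : lv j g = lv j σ₀.1 - h := by
    unfold lv; push_cast [hg]; ring
  have hDcc : Dc n α p A ^ (1-p) * Dc n α p A ^ p = Dc n α p A := by
    rw [← ENNReal.rpow_add _ _ hD0 hDt]
    norm_num
  have expand : c * (Bc n α p A * E (lv j σ₀.1 * ((n:ℝ) - α*p)))
      = Dc n α p A * E (lv j σ₀.1 * ((n:ℝ)-α) + (((i:ℝ)+1)*(p-1) - h*(α*(p-1)))) := by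
    rw [hc, hZ]
    rw [ENNReal.mul_rpow_of_ne_zero (mul_ne_zero hD0 (E_ne_zero _)) (E_ne_zero _),
      ENNReal.mul_rpow_of_ne_zero hD0 (E_ne_zero _), E_rpow, E_rpow,
      ← Dc_pow (n := n) (α := α) (A := A) hp]
    calc (Dc n α p A ^ (1 - p) * E (lv j g * (↑n - α) * (1 - p)) * E (-(↑i + 1) * (1 - p)))
          * E (lv j g * ↑n * (p - 1))
          * (Dc n α p A ^ p * E (lv j σ₀.1 * (↑n - α * p)))
        = (Dc n α p A ^ (1-p) * Dc n α p A ^ p) *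
          (E (lv j g * (↑n - α) * (1 - p)) * E (-(↑i + 1) * (1 - p))
            * E (lv j g * ↑n * (p - 1)) * E (lv j σ₀.1 * (↑n - α * p))) := by ring
    _ = Dc n α p A * E (lv j σ₀.1 * ((n:ℝ)-α) + (((i:ℝ)+1)*(p-1) - h*(α*(p-1)))) := by
        rw [hDcc, ← E_add, ← E_add, ← E_add]
        congr 2
        rw [hlv]
        ring
  have hlow : Dc n α p A * E (lv j σ₀.1 * ((n:ℝ)-α)) ≤ E ((i:ℝ)+1) * asub w j k σ₀ := by
    have h1 : Dc n α p A * E (lv j σ₀.1 * ((n:ℝ)-α)) =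
        (Dc n α p A * E (lv j σ₀.1 * ((n:ℝ)-α)) * E (-((i:ℝ)+1))) * E ((i:ℝ)+1) := by
      rw [mul_assoc, mul_assoc]
      rw [show E (-((i:ℝ)+1)) * E ((i:ℝ)+1) = 1 by rw [mul_comm]; exact E_cancel _]
      rw [mul_one]
    rw [h1, mul_comm (E ((i:ℝ)+1)) _]
    exact mul_le_mul_left (le_of_lt hMx.1.1) _
  calc mubar w α p A j k i σ₀ g ≤ c * (Bc n α p A * E (lv j σ₀.1 * ((n:ℝ) - α*p))) := stepB
  _ = (Dc n α p A * E (lv j σ₀.1 * ((n:ℝ)-α))) * E ((((i:ℝ)+1)*(p-1) - h*(α*(p-1)))) := by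
      rw [expand, E_add, mul_assoc]
  _ ≤ (E ((i:ℝ)+1) * asub w j k σ₀) * E ((((i:ℝ)+1)*(p-1) - h*(α*(p-1)))) :=
      mul_le_mul_left hlow _
  _ = E (p * ((i:ℝ)+1) - h * (α*(p-1))) * asub w j k σ₀ := by
      rw [mul_comm (E ((i:ℝ)+1)) _, mul_assoc, ← E_add]
      rw [show (i:ℝ) + 1 + (((i:ℝ)+1)*(p-1) - h*(α*(p-1))) = p * ((i:ℝ)+1) - h * (α*(p-1))
        by ring]
      ring


lemma mu_interp (hα : 0 < α) (hp : 1 < p) (hαp : α * p ≤ (n:ℝ)) (hwm : Measurable w)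
    (hA0 : A ≠ 0) (hAt : A ≠ ⊤)
    (hball : ∀ (x : Rn n) (r : ℝ), 0 < r →
      ∫⁻ y in Metric.ball x r, W w y ^ p ≤ A ^ p * (ENNReal.ofReal r) ^ ((n:ℝ) - α * p))
    {j : ℤ} {k : Fin n → ℤ} {i : ℕ} {σ₀ : ℕ × (Fin n → ℤ)}
    (hMx : Mx w α p A j k i σ₀) (h : ℕ) :
    mubar w α p A j k i σ₀ (σ₀.1 + h) ≤
      E (((i:ℝ)+1)/2) * E (-(h * (α*(p-1)/(2*p)))) * asub w j k σ₀ := by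
  set μ := mubar w α p A j k i σ₀ (σ₀.1 + h) with hμ
  set a := asub w j k σ₀ with ha
  set c : ℝ := p * ((i:ℝ)+1) - h * (α*(p-1)) with hcdef
  have hb : μ ≤ a := mu_base _
  have hd : μ ≤ E c * a := mu_decay hα hp hαp hwm hA0 hAt hball hMx h
  rcases eq_or_ne μ 0 with h0 | h0
  · rw [h0]; exact zero_le
  have hat : a ≠ ⊤ := asub_ne_top hα hp hαp hwm hA0 hAt hball j k σ₀
  have hμt : μ ≠ ⊤ := ne_top_of_le_ne_top hat hb
  have ha0 : a ≠ 0 := by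
    intro h'
    rw [h'] at hb
    exact h0 (le_antisymm hb (zero_le))
  set s : ℝ := 1/(2*p) with hsdef
  have hp0 : (0:ℝ) < p := by linarith
  have hs0 : (0:ℝ) ≤ s := by positivity
  have hs1 : (0:ℝ) ≤ 1 - s := by
    have : s ≤ 1/2 := by
      rw [hsdef]
      apply div_le_div_of_nonneg_left (by norm_num) (by norm_num) (by linarith)
    linarith
  have split : μ = μ ^ s * μ ^ (1-s) := by
    rw [← ENNReal.rpow_add _ _ h0 hμt, show s + (1-s) = 1 by ring, ENNReal.rpow_one]
  have split2 : a ^ s * a ^ (1-s) = a := by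
    rw [← ENNReal.rpow_add _ _ ha0 hat, show s + (1-s) = 1 by ring, ENNReal.rpow_one]
  calc μ = μ ^ s * μ ^ (1-s) := split
  _ ≤ (E c * a) ^ s * a ^ (1-s) :=
      mul_le_mul' (ENNReal.rpow_le_rpow hd hs0) (ENNReal.rpow_le_rpow hb hs1)
  _ = E (c*s) * (a ^ s * a ^ (1-s)) := by
      rw [ENNReal.mul_rpow_of_nonneg _ _ hs0, E_rpow, mul_assoc]
  _ = E (c*s) * a := by rw [split2]
  _ = E (((i:ℝ)+1)/2) * E (-(h * (α*(p-1)/(2*p)))) * a := by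
      rw [← E_add]
      congr 1
      rw [hcdef, hsdef]
      field_simp
      ring

lemma fiber_le (hα : 0 < α) (hp : 1 < p) (hαp : α * p ≤ (n:ℝ)) (hwm : Measurable w)
    (hA0 : A ≠ 0) (hAt : A ≠ ⊤)
    (hball : ∀ (x : Rn n) (r : ℝ), 0 < r →
      ∫⁻ y in Metric.ball x r, W w y ^ p ≤ A ^ p * (ENNReal.ofReal r) ^ ((n:ℝ) - α * p))
    {j : ℤ} {k : Fin n → ℤ} {i : ℕ} {σ₀ : ℕ × (Fin n → ℤ)}
    (hMx : Mx w α p A j k i σ₀) :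
    ∑' g : ℕ, mubar w α p A j k i σ₀ g ≤
      E (((i:ℝ)+1)/2) * (1 - E (-(α*(p-1)/(2*p))))⁻¹ * asub w j k σ₀ := by
  rw [tsum_shift σ₀.1 (fun g hg => mu_zero hg)]
  calc ∑' h : ℕ, mubar w α p A j k i σ₀ (σ₀.1 + h)
      ≤ ∑' h : ℕ, E (((i:ℝ)+1)/2) * E (-(h * (α*(p-1)/(2*p)))) * asub w j k σ₀ :=
        ENNReal.tsum_le_tsum (fun h => mu_interp hα hp hαp hwm hA0 hAt hball hMx h)
  _ = E (((i:ℝ)+1)/2) * (∑' h : ℕ, E (-(h * (α*(p-1)/(2*p))))) * asub w j k σ₀ := by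
        rw [ENNReal.tsum_mul_right, ENNReal.tsum_mul_left]
  _ = E (((i:ℝ)+1)/2) * (1 - E (-(α*(p-1)/(2*p))))⁻¹ * asub w j k σ₀ := by
        rw [tsum_E_neg]

lemma Ti_le (hα : 0 < α) (hp : 1 < p) (hαp : α * p ≤ (n:ℝ)) (hwm : Measurable w)
    (hA0 : A ≠ 0) (hAt : A ≠ ⊤)
    (hball : ∀ (x : Rn n) (r : ℝ), 0 < r →
      ∫⁻ y in Metric.ball x r, W w y ^ p ≤ A ^ p * (ENNReal.ofReal r) ^ ((n:ℝ) - α * p))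
    (j : ℤ) (k : Fin n → ℤ) (i : ℕ) :
    ∑' σ : ℕ × (Fin n → ℤ), ch (Lmem w α p A j k i σ) * asub w j k σ ≤
      E (((i:ℝ)+1)/2) * (1 - E (-(α*(p-1)/(2*p))))⁻¹ * ∫⁻ x in cube n j k, W w x := by
  set cc := E (((i:ℝ)+1)/2) * (1 - E (-(α*(p-1)/(2*p))))⁻¹ with hcc
  have step1 : ∀ σ, ch (Lmem w α p A j k i σ) * asub w j k σ
      = ∑' σ₀ : ℕ × (Fin n → ℤ),
        ch (Lmem w α p A j k i σ ∧ phi w α p A j k i σ = σ₀) * asub w j k σ := by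
    intro σ
    rcases em (Lmem w α p A j k i σ) with hL | hL
    · rw [tsum_eq_single (phi w α p A j k i σ) ?_]
      · rw [ch_true hL, ch_true ⟨hL, rfl⟩]
      · intro σ₀ hne
        rw [ch_false (fun hc => hne hc.2.symm), zero_mul]
    · have hz : ∀ σ₀ : ℕ × (Fin n → ℤ),
          ch (Lmem w α p A j k i σ ∧ phi w α p A j k i σ = σ₀) * asub w j k σ = 0 :=
        fun σ₀ => by rw [ch_false (fun hc => hL hc.1), zero_mul]
      rw [tsum_congr hz, tsum_zero, ch_false hL, zero_mul]
  have inner : ∀ σ₀ : ℕ × (Fin n → ℤ),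
      (∑' σ : ℕ × (Fin n → ℤ),
        ch (Lmem w α p A j k i σ ∧ phi w α p A j k i σ = σ₀) * asub w j k σ)
      ≤ ch (Mx w α p A j k i σ₀) * (cc * asub w j k σ₀) := by
    intro σ₀
    rcases em (Mx w α p A j k i σ₀) with hM | hM
    · rw [ch_true hM, one_mul]
      have hprod : (∑' σ : ℕ × (Fin n → ℤ),
          ch (Lmem w α p A j k i σ ∧ phi w α p A j k i σ = σ₀) * asub w j k σ)
          = ∑' g : ℕ, mubar w α p A j k i σ₀ g := by
        rw [ENNReal.tsum_prod (f := fun g t =>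
          ch (Lmem w α p A j k i (g, t) ∧ phi w α p A j k i (g, t) = σ₀)
            * asub w j k (g, t))]
        rfl
      rw [hprod]
      exact fiber_le hα hp hαp hwm hA0 hAt hball hM
    · have hz : ∀ σ : ℕ × (Fin n → ℤ),
          ch (Lmem w α p A j k i σ ∧ phi w α p A j k i σ = σ₀) * asub w j k σ = 0 := by
        intro σ
        apply mul_eq_zero.2
        left
        apply ch_false
        intro hc
        have := (phi_spec hc.1).1
        rw [hc.2] at this
        exact hM this
      rw [tsum_congr hz, tsum_zero]
      exact zero_le
  calc ∑' σ : ℕ × (Fin n → ℤ), ch (Lmem w α p A j k i σ) * asub w j k σ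
      = ∑' (σ : ℕ × (Fin n → ℤ)) (σ₀ : ℕ × (Fin n → ℤ)),
        ch (Lmem w α p A j k i σ ∧ phi w α p A j k i σ = σ₀) * asub w j k σ :=
        tsum_congr step1
  _ = ∑' (σ₀ : ℕ × (Fin n → ℤ)) (σ : ℕ × (Fin n → ℤ)),
        ch (Lmem w α p A j k i σ ∧ phi w α p A j k i σ = σ₀) * asub w j k σ :=
        ENNReal.tsum_comm
  _ ≤ ∑' σ₀ : ℕ × (Fin n → ℤ), ch (Mx w α p A j k i σ₀) * (cc * asub w j k σ₀) :=
        ENNReal.tsum_le_tsum inner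
  _ = cc * ∑' σ₀ : ℕ × (Fin n → ℤ), ch (Mx w α p A j k i σ₀) * asub w j k σ₀ := by
        rw [← ENNReal.tsum_mul_left]
        exact tsum_congr fun σ₀ => by ring
  _ ≤ cc * ∫⁻ x in cube n j k, W w x :=
        mul_le_mul_right (Mx_sum_le j k i) _

def CT (α p : ℝ) : ℝ≥0∞ :=
  (1 - E (-(α*(p-1)/(2*p))))⁻¹ * (E (1/2) * (1 - E (-(1/2)))⁻¹)

lemma CT_ne_top (hα : 0 < α) (hp : 1 < p) : CT α p ≠ ⊤ := by
  unfold CT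
  apply ENNReal.mul_ne_top
  · rw [Ne, ENNReal.inv_eq_top, tsub_eq_zero_iff_le]
    intro hcon
    have : E (-(α*(p-1)/(2*p))) < 1 := E_lt_one (by
      have h1 : (0:ℝ) < α*(p-1) := by nlinarith
      have h2 : (0:ℝ) < 2*p := by linarith
      have := div_pos h1 h2
      linarith)
    exact absurd hcon (not_le.2 this)
  · apply ENNReal.mul_ne_top (E_ne_top _)
    rw [Ne, ENNReal.inv_eq_top, tsub_eq_zero_iff_le]
    intro hcon
    have : E (-(1/2 : ℝ)) < 1 := E_lt_one (by norm_num)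
    exact absurd hcon (not_le.2 this)

lemma TT_le (hα : 0 < α) (hp : 1 < p) (hαp : α * p ≤ (n:ℝ)) (hwm : Measurable w)
    (hA0 : A ≠ 0) (hAt : A ≠ ⊤)
    (hball : ∀ (x : Rn n) (r : ℝ), 0 < r →
      ∫⁻ y in Metric.ball x r, W w y ^ p ≤ A ^ p * (ENNReal.ofReal r) ^ ((n:ℝ) - α * p))
    (j : ℤ) (k : Fin n → ℤ) :
    ∑' σ : ℕ × (Fin n → ℤ), E (lv j σ.1 * (α - (n:ℝ))) * asub w j k σ * asub w j k σ
      ≤ Dc n α p A * CT α p * ∫⁻ x in cube n j k, W w x := by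
  set cτ := (1 - E (-(α*(p-1)/(2*p))))⁻¹ with hcτ
  have per : ∀ σ : ℕ × (Fin n → ℤ),
      E (lv j σ.1 * (α - (n:ℝ))) * asub w j k σ * asub w j k σ ≤
      ∑' i : ℕ, ch (Lmem w α p A j k i σ) * (E (-(i:ℝ)) * Dc n α p A * asub w j k σ) := by
    intro σ
    rcases eq_or_ne (asub w j k σ) 0 with h0 | h0
    · rw [h0, mul_zero]
      exact zero_le
    obtain ⟨i₀, hi₀⟩ := exists_layer hα hp hαp hwm hA0 hAt hball j k σ h0
    have hterm : E (lv j σ.1 * (α - (n:ℝ))) * asub w j k σ * asub w j k σ ≤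
        ch (Lmem w α p A j k i₀ σ) * (E (-(i₀:ℝ)) * Dc n α p A * asub w j k σ) := by
      rw [ch_true hi₀, one_mul]
      have hub := hi₀.2
      calc E (lv j σ.1 * (α - (n:ℝ))) * asub w j k σ * asub w j k σ
          = asub w j k σ * E (lv j σ.1 * (α - (n:ℝ))) * asub w j k σ := by ring
      _ ≤ (Dc n α p A * E (lv j σ.1 * ((n:ℝ) - α)) * E (-(i₀:ℝ)))
            * E (lv j σ.1 * (α - (n:ℝ))) * asub w j k σ := by
          apply mul_le_mul_left
          exact mul_le_mul_left hub _
      _ = E (-(i₀:ℝ)) * Dc n α p A * asub w j k σ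
            * (E (lv j σ.1 * ((n:ℝ) - α)) * E (lv j σ.1 * (α - (n:ℝ)))) := by ring
      _ = E (-(i₀:ℝ)) * Dc n α p A * asub w j k σ := by
          rw [← E_add, show lv j σ.1 * ((n:ℝ) - α) + lv j σ.1 * (α - (n:ℝ)) = 0 by ring,
            E_zero, mul_one]
    exact le_trans hterm (ENNReal.le_tsum i₀)
  calc ∑' σ : ℕ × (Fin n → ℤ), E (lv j σ.1 * (α - (n:ℝ))) * asub w j k σ * asub w j k σ
      ≤ ∑' (σ : ℕ × (Fin n → ℤ)) (i : ℕ),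
        ch (Lmem w α p A j k i σ) * (E (-(i:ℝ)) * Dc n α p A * asub w j k σ) :=
        ENNReal.tsum_le_tsum per
  _ = ∑' (i : ℕ) (σ : ℕ × (Fin n → ℤ)),
        ch (Lmem w α p A j k i σ) * (E (-(i:ℝ)) * Dc n α p A * asub w j k σ) :=
        ENNReal.tsum_comm
  _ = ∑' i : ℕ, E (-(i:ℝ)) * Dc n α p A *
        ∑' σ : ℕ × (Fin n → ℤ), ch (Lmem w α p A j k i σ) * asub w j k σ := by
        apply tsum_congr
        intro i
        rw [← ENNReal.tsum_mul_left]
        exact tsum_congr fun σ => by ring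
  _ ≤ ∑' i : ℕ, E (-(i:ℝ)) * Dc n α p A *
        (E (((i:ℝ)+1)/2) * cτ * ∫⁻ x in cube n j k, W w x) :=
        ENNReal.tsum_le_tsum fun i =>
          mul_le_mul_right (Ti_le hα hp hαp hwm hA0 hAt hball j k i) _
  _ = Dc n α p A * cτ * (∫⁻ x in cube n j k, W w x) *
        ∑' i : ℕ, (E (-(i:ℝ)) * E (((i:ℝ)+1)/2)) := by
        rw [← ENNReal.tsum_mul_left]
        exact tsum_congr fun i => by ring
  _ = Dc n α p A * CT α p * ∫⁻ x in cube n j k, W w x := by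
        have hsum : ∑' i : ℕ, (E (-(i:ℝ)) * E (((i:ℝ)+1)/2))
            = E (1/2) * (1 - E (-(1/2)))⁻¹ := by
          have : ∀ i : ℕ, E (-(i:ℝ)) * E (((i:ℝ)+1)/2) = E (1/2) * E (-((i:ℝ) * (1/2))) := by
            intro i
            rw [← E_add, ← E_add]
            congr 1
            ring
          rw [tsum_congr this, ENNReal.tsum_mul_left, tsum_E_neg]
        rw [hsum, CT]
        ring

end Layer

variable {n : ℕ} {α p : ℝ} {w : Rn n → ℝ}

/-- neighbor box -/
def box (n : ℕ) : Finset (Fin n → ℤ) :=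
  Fintype.piFinset fun _ => Finset.Icc (-(n+1) : ℤ) (n+1)

lemma neighbor_mem {m : ℤ} {t t' : Fin n → ℤ} {x y : Rn n}
    (hx : x ∈ cube n m t) (hy : y ∈ cube n m t')
    (hd : ‖x - y‖ ≤ (n:ℝ) * 2 ^ m) : t' - t ∈ box n := by
  rw [box, Fintype.mem_piFinset]
  intro i
  rw [Finset.mem_Icc]
  have hsubap : (t' - t) i = t' i - t i := rfl
  rw [hsubap]
  have h2 := zp m
  obtain ⟨a1, b1⟩ := hx i
  obtain ⟨a2, b2⟩ := hy i
  have hco : |x i - y i| ≤ (n:ℝ) * 2 ^ m := by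
    have := abs_coord_le_norm (x - y) i
    have he : (x - y) i = x i - y i := rfl
    rw [he] at this
    linarith
  rw [abs_le] at hco
  constructor
  · -- -(n+1) ≤ t' i - t i
    have key : (t i : ℝ) - (t' i) < (n:ℝ) + 1 := by
      have h3 : (t i : ℝ) * 2 ^ m - ((t' i : ℝ) + 1) * 2 ^ m < x i - y i := by nlinarith
      have h4 : (t i : ℝ) * 2 ^ m - ((t' i : ℝ) + 1) * 2 ^ m ≤ (n:ℝ) * 2 ^ m := by linarith
      nlinarith
    have : (t i : ℤ) - t' i < (n:ℤ) + 1 := by exact_mod_cast key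
    omega
  · have key : (t' i : ℝ) - (t i) < (n:ℝ) + 1 := by
      have h3 : (t' i : ℝ) * 2 ^ m - ((t i : ℝ) + 1) * 2 ^ m < y i - x i := by nlinarith
      have h4 : (t' i : ℝ) * 2 ^ m - ((t i : ℝ) + 1) * 2 ^ m ≤ (n:ℝ) * 2 ^ m := by linarith
      nlinarith
    have : (t' i : ℤ) - t i < (n:ℤ) + 1 := by exact_mod_cast key
    omega

def cK (n : ℕ) (α : ℝ) : ℝ≥0∞ :=
  ENNReal.ofReal ((n:ℝ) ^ (α - (n:ℝ)) * 2 ^ ((n:ℝ) - α))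

lemma cK_ne_top : cK n α ≠ ⊤ := ENNReal.ofReal_ne_top

/-- the dyadic kernel bound -/
lemma kernel_le (hn : 0 < n) (hαn : α < n) {j : ℤ} {k : Fin n → ℤ} {x y : Rn n}
    (hx : x ∈ cube n j k) (hy : y ∈ cube n j k) :
    ENNReal.ofReal (‖x - y‖ ^ (α - (n:ℝ))) ≤
      cK n α * ∑' g : ℕ,
        ch (‖x - y‖ ≤ (n:ℝ) * 2 ^ (j - (g:ℤ))) * E (lv j g * (α - (n:ℝ))) := by
  rcases eq_or_ne x y with rfl | hne
  · simp only [sub_self, norm_zero]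
    rw [Real.zero_rpow (by intro h; rw [sub_eq_zero] at h; exact absurd h (by exact_mod_cast ne_of_lt hαn))]
    simp
  set d := ‖x - y‖ with hd
  have hd0 : 0 < d := by
    rw [hd, norm_pos_iff, sub_ne_zero]
    exact hne
  have hn1 : (1:ℝ) ≤ n := by exact_mod_cast hn
  have hex : ∃ g : ℕ, (n:ℝ) * 2 ^ (j - (g:ℤ) - 1) < d := by
    obtain ⟨m, hm⟩ := pow_unbounded_of_one_lt ((n:ℝ) * 2 ^ (j - 1) / d) (by norm_num : (1:ℝ) < 2)
    refine ⟨m, ?_⟩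
    rw [div_lt_iff₀ hd0] at hm
    have he : (2:ℝ) ^ (j - (m:ℤ) - 1) = 2 ^ (j-1) / 2 ^ (m:ℤ) := by
      rw [← zpow_sub₀ (by norm_num : (2:ℝ) ≠ 0)]
      congr 1
      ring
    have h2m : (2:ℝ) ^ (m:ℤ) = 2 ^ m := zpow_natCast 2 m
    rw [he, h2m, ← mul_div_assoc, div_lt_iff₀ (by positivity)]
    rw [mul_comm ((2:ℝ) ^ m) d] at hm
    linarith
  set g₀ := Nat.find hex with hg₀
  have hlow : (n:ℝ) * 2 ^ (j - (g₀:ℤ) - 1) < d := Nat.find_spec hex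
  have hup : d ≤ (n:ℝ) * 2 ^ (j - (g₀:ℤ)) := by
    rcases Nat.eq_zero_or_pos g₀ with h0 | h0
    · rw [h0]
      simp only [Nat.cast_zero, sub_zero]
      exact norm_sub_le_cube hx hy
    · obtain ⟨m, hm⟩ := Nat.exists_eq_succ_of_ne_zero (Nat.pos_iff_ne_zero.1 h0)
      have := Nat.find_min hex (m := m) (by omega)
      rw [not_lt] at this
      have he : j - (m:ℤ) - 1 = j - (g₀:ℤ) := by
        rw [hm]
        push_cast
        ring
      rw [he] at this
      exact this
  -- kernel estimate at scale g₀
  have hker : ENNReal.ofReal (d ^ (α - (n:ℝ))) ≤ cK n α * E (lv j g₀ * (α - (n:ℝ))) := by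
    have hreal : d ^ (α - (n:ℝ)) ≤
        ((n:ℝ) * 2 ^ (j - (g₀:ℤ) - 1)) ^ (α - (n:ℝ)) := by
      apply Real.rpow_le_rpow_of_nonpos (by positivity) (le_of_lt hlow)
      linarith
    have hsplit : ((n:ℝ) * 2 ^ (j - (g₀:ℤ) - 1)) ^ (α - (n:ℝ)) =
        (n:ℝ) ^ (α - (n:ℝ)) * 2 ^ ((n:ℝ) - α) * 2 ^ (((j:ℝ) - g₀) * (α - (n:ℝ))) := by
      rw [Real.mul_rpow (by positivity) (by positivity)]
      have h1 : ((2:ℝ) ^ (j - (g₀:ℤ) - 1)) ^ (α - (n:ℝ))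
          = (2:ℝ) ^ ((((j:ℝ) - g₀) - 1) * (α - (n:ℝ))) := by
        rw [← Real.rpow_intCast 2 (j - (g₀:ℤ) - 1)]
        rw [← Real.rpow_mul (by norm_num)]
        congr 1
        push_cast
        ring
      rw [h1]
      have h2 : (((j:ℝ) - g₀) - 1) * (α - (n:ℝ))
          = ((n:ℝ) - α) + ((j:ℝ) - g₀) * (α - (n:ℝ)) := by ring
      rw [h2, Real.rpow_add (by norm_num)]
      ring
    calc ENNReal.ofReal (d ^ (α - (n:ℝ)))
        ≤ ENNReal.ofReal ((n:ℝ) ^ (α - (n:ℝ)) * 2 ^ ((n:ℝ) - α)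
            * 2 ^ (((j:ℝ) - g₀) * (α - (n:ℝ)))) := by
          apply ENNReal.ofReal_le_ofReal
          rw [← hsplit]
          exact hreal
    _ = cK n α * E (lv j g₀ * (α - (n:ℝ))) := by
          rw [ENNReal.ofReal_mul (by positivity), ofReal_two_rpow, cK, lv]
  calc ENNReal.ofReal (d ^ (α - (n:ℝ))) ≤ cK n α * E (lv j g₀ * (α - (n:ℝ))) := hker
  _ = cK n α * (ch (d ≤ (n:ℝ) * 2 ^ (j - (g₀:ℤ))) * E (lv j g₀ * (α - (n:ℝ)))) := by
      rw [ch_true hup, one_mul]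
  _ ≤ cK n α * ∑' g : ℕ, ch (d ≤ (n:ℝ) * 2 ^ (j - (g:ℤ))) * E (lv j g * (α - (n:ℝ))) :=
      mul_le_mul_right (ENNReal.le_tsum g₀) _

lemma mul_le_sq_add (a b : ℝ≥0∞) : a * b ≤ a*a + b*b := by
  rcases le_total a b with h | h
  · calc a*b ≤ b*b := mul_le_mul_left h b
    _ ≤ a*a + b*b := le_add_self
  · calc a*b ≤ a*a := mul_le_mul_right h a
    _ ≤ a*a + b*b := le_self_add

section IQ
variable (hn : 0 < n) (hαn : α < (n:ℝ)) (hw : 0 ≤ w) (hwm : Measurable w)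

/-- radius at scale g -/
def Rg (n : ℕ) (j : ℤ) (g : ℕ) : ℝ := (n:ℝ) * 2 ^ (j - (g:ℤ))

def inn (w : Rn n → ℝ) (j : ℤ) (k : Fin n → ℤ) (g : ℕ) (x : Rn n) : ℝ≥0∞ :=
  ∫⁻ y in cube n j k, ch (‖x - y‖ ≤ Rg n j g) * W w y

lemma meas_ker (j : ℤ) (k : Fin n → ℤ) (g : ℕ) (hwm : Measurable w) :
    Measurable (Function.uncurry fun (x y : Rn n) => ch (‖x - y‖ ≤ Rg n j g) * W w y) := by
  apply Measurable.mul
  · simp only [ch]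
    apply Measurable.ite _ measurable_const measurable_const
    have hcont : Continuous (fun q : Rn n × Rn n => ‖q.1 - q.2‖) :=
      (continuous_fst.sub continuous_snd).norm
    exact (isClosed_le hcont continuous_const).measurableSet
  · exact hwm.ennreal_ofReal.comp measurable_snd

lemma meas_inn (j : ℤ) (k : Fin n → ℤ) (g : ℕ) (hwm : Measurable w) :
    Measurable (inn w j k g) :=
  Measurable.lintegral_prod_right (meas_ker j k g hwm)

lemma inn_le (j : ℤ) (k : Fin n → ℤ) (g : ℕ) (hwm : Measurable w) {t : Fin n → ℤ}
    {x : Rn n} (hx : x ∈ cube n (j - (g:ℕ)) t) :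
    inn w j k g x ≤ ∑ δ ∈ box n, asub w j k (g, t + δ) := by
  have hset : MeasurableSet {y : Rn n | ‖x - y‖ ≤ Rg n j g} := by
    have hcont : Continuous (fun y : Rn n => ‖x - y‖) := (continuous_const.sub continuous_id).norm
    exact (isClosed_le hcont continuous_const).measurableSet
  have h1 : inn w j k g x = ∫⁻ y in {y : Rn n | ‖x - y‖ ≤ Rg n j g} ∩ cube n j k, W w y := by
    rw [inn]
    have he : (fun y => ch (‖x - y‖ ≤ Rg n j g) * W w y)
        = Set.indicator {y : Rn n | ‖x - y‖ ≤ Rg n j g} (W w) := by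
      funext y
      by_cases h : ‖x - y‖ ≤ Rg n j g
      · simp [ch, Set.indicator_apply, h]
      · simp [ch, Set.indicator_apply, h]
    rw [he, lintegral_indicator hset, Measure.restrict_restrict hset]
  rw [h1]
  have hsub : {y : Rn n | ‖x - y‖ ≤ Rg n j g} ∩ cube n j k ⊆
      ⋃ δ : ↥(box n), piece n j k g (t + δ.1) := by
    rintro y ⟨hyd, hyQ⟩
    have hy' : y ∈ cube n (j - (g:ℕ)) (idx (j - (g:ℕ)) y) := mem_cube_idx _ y
    have hδ : idx (j - (g:ℕ)) y - t ∈ box n := neighbor_mem hx hy' hyd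
    refine Set.mem_iUnion.2 ⟨⟨_, hδ⟩, hyQ, ?_⟩
    have : t + (idx (j - (g:ℕ)) y - t) = idx (j - (g:ℕ)) y := by abel
    rw [this]
    exact hy'
  calc ∫⁻ y in {y : Rn n | ‖x - y‖ ≤ Rg n j g} ∩ cube n j k, W w y
      ≤ ∫⁻ y in ⋃ δ : ↥(box n), piece n j k g (t + δ.1), W w y :=
        lintegral_mono_set' hsub _
  _ ≤ ∑' δ : ↥(box n), ∫⁻ y in piece n j k g (t + δ.1), W w y :=
        lintegral_iUnion_le _ _
  _ = ∑ δ ∈ box n, asub w j k (g, t + δ) := by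
        rw [← Finset.tsum_subtype (box n) (fun δ => asub w j k (g, t + δ))]
        rfl

lemma step_g (j : ℤ) (k : Fin n → ℤ) (g : ℕ) (hwm : Measurable w) :
    ∫⁻ x in cube n j k, W w x * inn w j k g x ≤
      2 * ((box n).card : ℝ≥0∞) *
        ∑' t : Fin n → ℤ, asub w j k (g, t) * asub w j k (g, t) := by
  rw [lintegral_Q_tsum j k g]
  have per : ∀ t : Fin n → ℤ, ∫⁻ x in piece n j k g t, W w x * inn w j k g x
      ≤ asub w j k (g, t) * ∑ δ ∈ box n, asub w j k (g, t + δ) := by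
    intro t
    calc ∫⁻ x in piece n j k g t, W w x * inn w j k g x
        ≤ ∫⁻ x in piece n j k g t, W w x * ∑ δ ∈ box n, asub w j k (g, t + δ) := by
          apply setLIntegral_mono (by
            exact (hwm.ennreal_ofReal.mul_const _))
          intro x hx
          exact mul_le_mul_right (inn_le j k g hwm hx.2) _
    _ = asub w j k (g, t) * ∑ δ ∈ box n, asub w j k (g, t + δ) := by
          rw [lintegral_mul_const _ (show Measurable (W w) from hwm.ennreal_ofReal)]
          rfl
  calc ∑' t : Fin n → ℤ, ∫⁻ x in piece n j k g t, W w x * inn w j k g x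
      ≤ ∑' t : Fin n → ℤ, asub w j k (g, t) * ∑ δ ∈ box n, asub w j k (g, t + δ) :=
        ENNReal.tsum_le_tsum per
  _ = ∑' t : Fin n → ℤ, ∑ δ ∈ box n, asub w j k (g, t) * asub w j k (g, t + δ) := by
        exact tsum_congr fun t => Finset.mul_sum _ _ _
  _ = ∑ δ ∈ box n, ∑' t : Fin n → ℤ, asub w j k (g, t) * asub w j k (g, t + δ) :=
        Summable.tsum_finsetSum (fun δ _ => ENNReal.summable)
  _ ≤ ∑ δ ∈ box n, ∑' t : Fin n → ℤ,
        (asub w j k (g, t) * asub w j k (g, t) + asub w j k (g, t+δ) * asub w j k (g, t+δ)) :=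
        Finset.sum_le_sum fun δ _ => ENNReal.tsum_le_tsum fun t => mul_le_sq_add _ _
  _ = ∑ δ ∈ box n, (∑' t : Fin n → ℤ, asub w j k (g, t) * asub w j k (g, t)
        + ∑' t : Fin n → ℤ, asub w j k (g, t+δ) * asub w j k (g, t+δ)) := by
        exact Finset.sum_congr rfl fun δ _ => ENNReal.tsum_add
  _ = ∑ δ ∈ box n, (2 * ∑' t : Fin n → ℤ, asub w j k (g, t) * asub w j k (g, t)) := by
        apply Finset.sum_congr rfl
        intro δ _
        have htr : ∑' t : Fin n → ℤ, asub w j k (g, t+δ) * asub w j k (g, t+δ)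
            = ∑' t : Fin n → ℤ, asub w j k (g, t) * asub w j k (g, t) :=
          (Equiv.addRight δ).tsum_eq (fun t => asub w j k (g, t) * asub w j k (g, t))
        rw [htr, two_mul]
  _ = 2 * ((box n).card : ℝ≥0∞) *
        ∑' t : Fin n → ℤ, asub w j k (g, t) * asub w j k (g, t) := by
        rw [Finset.sum_const, nsmul_eq_mul]
        ring

lemma IQ_le (hn : 0 < n) (hαn : α < (n:ℝ)) (hw : 0 ≤ w) (hwm : Measurable w)
    (j : ℤ) (k : Fin n → ℤ) :
    (∫⁻ x in cube n j k, ∫⁻ y in cube n j k,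
        ENNReal.ofReal (w x * w y * ‖x - y‖ ^ (α - (n:ℝ))))
      ≤ cK n α * (2 * ((box n).card : ℝ≥0∞)) *
        ∑' σ : ℕ × (Fin n → ℤ), E (lv j σ.1 * (α - (n:ℝ))) * asub w j k σ * asub w j k σ := by
  have hWm : Measurable (W w) := hwm.ennreal_ofReal
  -- pointwise in x ∈ Q
  have stepA : ∀ x ∈ cube n j k,
      (∫⁻ y in cube n j k, ENNReal.ofReal (w x * w y * ‖x - y‖ ^ (α - (n:ℝ))))
        ≤ cK n α * (W w x * ∑' g : ℕ, E (lv j g * (α - (n:ℝ))) * inn w j k g x) := by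
    intro x hx
    have hinteg : ∀ y, ENNReal.ofReal (w x * w y * ‖x - y‖ ^ (α - (n:ℝ)))
        = W w x * W w y * ENNReal.ofReal (‖x - y‖ ^ (α - (n:ℝ))) := by
      intro y
      rw [ENNReal.ofReal_mul (mul_nonneg (hw x) (hw y)), ENNReal.ofReal_mul (hw x)]
      rfl
    have hptwise : ∀ y ∈ cube n j k, ENNReal.ofReal (w x * w y * ‖x - y‖ ^ (α - (n:ℝ)))
        ≤ ∑' g : ℕ, cK n α * W w x *
            (E (lv j g * (α - (n:ℝ))) * (ch (‖x - y‖ ≤ Rg n j g) * W w y)) := by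
      intro y hy
      rw [hinteg y]
      calc W w x * W w y * ENNReal.ofReal (‖x - y‖ ^ (α - (n:ℝ)))
          ≤ W w x * W w y * (cK n α * ∑' g : ℕ,
              ch (‖x - y‖ ≤ (n:ℝ) * 2 ^ (j - (g:ℤ))) * E (lv j g * (α - (n:ℝ)))) :=
            mul_le_mul_right (kernel_le hn hαn hx hy) _
      _ = ∑' g : ℕ, cK n α * W w x *
            (E (lv j g * (α - (n:ℝ))) * (ch (‖x - y‖ ≤ Rg n j g) * W w y)) := by
          rw [← ENNReal.tsum_mul_left, ← ENNReal.tsum_mul_left]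
          exact tsum_congr fun g => by rw [Rg]; ring
    have hmterm : ∀ g : ℕ, Measurable (fun y : Rn n =>
        ch (‖x - y‖ ≤ Rg n j g) * W w y) := by
      intro g
      apply Measurable.mul _ hWm
      simp only [ch]
      apply Measurable.ite _ measurable_const measurable_const
      have hcont : Continuous (fun y : Rn n => ‖x - y‖) :=
        (continuous_const.sub continuous_id).norm
      exact (isClosed_le hcont continuous_const).measurableSet
    have hmterm2 : ∀ g : ℕ, Measurable (fun y : Rn n => cK n α * W w x *
        (E (lv j g * (α - (n:ℝ))) * (ch (‖x - y‖ ≤ Rg n j g) * W w y))) :=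
      fun g => ((hmterm g).const_mul _).const_mul _
    have hmRHS : Measurable (fun y : Rn n => ∑' g : ℕ, cK n α * W w x *
        (E (lv j g * (α - (n:ℝ))) * (ch (‖x - y‖ ≤ Rg n j g) * W w y))) :=
      Measurable.ennreal_tsum hmterm2
    have hWx_ne_top : cK n α * W w x ≠ ⊤ :=
      ENNReal.mul_ne_top cK_ne_top ENNReal.ofReal_ne_top
    calc (∫⁻ y in cube n j k, ENNReal.ofReal (w x * w y * ‖x - y‖ ^ (α - (n:ℝ))))
        ≤ ∫⁻ y in cube n j k, ∑' g : ℕ, cK n α * W w x *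
            (E (lv j g * (α - (n:ℝ))) * (ch (‖x - y‖ ≤ Rg n j g) * W w y)) :=
          setLIntegral_mono hmRHS hptwise
    _ = ∑' g : ℕ, cK n α * W w x *
          (E (lv j g * (α - (n:ℝ))) * inn w j k g x) := by
          rw [lintegral_tsum (fun g => (hmterm2 g).aemeasurable)]
          apply tsum_congr
          intro g
          rw [lintegral_const_mul' _ _ hWx_ne_top,
            lintegral_const_mul' _ _ (E_ne_top _), inn]
    _ = cK n α * (W w x * ∑' g : ℕ, E (lv j g * (α - (n:ℝ))) * inn w j k g x) := by
          rw [← ENNReal.tsum_mul_left, ← ENNReal.tsum_mul_left]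
          exact tsum_congr fun g => by ring
  calc (∫⁻ x in cube n j k, ∫⁻ y in cube n j k,
        ENNReal.ofReal (w x * w y * ‖x - y‖ ^ (α - (n:ℝ))))
      ≤ ∫⁻ x in cube n j k,
          cK n α * (W w x * ∑' g : ℕ, E (lv j g * (α - (n:ℝ))) * inn w j k g x) := by
        apply setLIntegral_mono (by
          apply Measurable.const_mul
          apply hWm.mul
          apply Measurable.ennreal_tsum
          intro g
          exact (meas_inn j k g hwm).const_mul _) stepA
  _ = cK n α * ∑' g : ℕ, E (lv j g * (α - (n:ℝ))) *
        ∫⁻ x in cube n j k, W w x * inn w j k g x := by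
        rw [lintegral_const_mul' _ _ cK_ne_top]
        congr 1
        have he : ∀ x, W w x * ∑' g : ℕ, E (lv j g * (α - (n:ℝ))) * inn w j k g x
            = ∑' g : ℕ, E (lv j g * (α - (n:ℝ))) * (W w x * inn w j k g x) := by
          intro x
          rw [← ENNReal.tsum_mul_left]
          exact tsum_congr fun g => by ring
        rw [lintegral_congr he, lintegral_tsum (fun g => by
          apply Measurable.aemeasurable
          exact ((hWm.mul (meas_inn j k g hwm)).const_mul _))]
        exact tsum_congr fun g => lintegral_const_mul' _ _ (E_ne_top _)
  _ ≤ cK n α * ∑' g : ℕ, E (lv j g * (α - (n:ℝ))) *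
        (2 * ((box n).card : ℝ≥0∞) *
          ∑' t : Fin n → ℤ, asub w j k (g, t) * asub w j k (g, t)) := by
        apply mul_le_mul_right
        exact ENNReal.tsum_le_tsum fun g =>
          mul_le_mul_right (step_g j k g hwm) _
  _ = cK n α * (2 * ((box n).card : ℝ≥0∞)) *
        ∑' σ : ℕ × (Fin n → ℤ), E (lv j σ.1 * (α - (n:ℝ))) * asub w j k σ * asub w j k σ := by
        rw [ENNReal.tsum_prod (f := fun g t =>
          E (lv j g * (α - (n:ℝ))) * asub w j k (g, t) * asub w j k (g, t))]
        rw [mul_assoc (cK n α) (2 * ((box n).card : ℝ≥0∞)) _,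
          ← ENNReal.tsum_mul_left (a := 2 * ((box n).card : ℝ≥0∞))]
        congr 1
        apply tsum_congr
        intro g
        rw [← ENNReal.tsum_mul_left, ← ENNReal.tsum_mul_left, ← ENNReal.tsum_mul_left]
        exact tsum_congr fun t => by ring

end IQ

lemma ball_bound (hα : 0 < α) (hp : 1 < p) (hw : 0 ≤ w) (hMC : MCnorm n α p w ≠ ⊤)
    (x : Rn n) (r : ℝ) (hr : 0 < r) :
    ∫⁻ y in Metric.ball x r, W w y ^ p ≤
      (MCnorm n α p w + 1) ^ p * (ENNReal.ofReal r) ^ ((n:ℝ) - α * p) := by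
  have hp0 : (0:ℝ) < p := by linarith
  set A₀ := MCnorm n α p w with hA₀
  set R := ENNReal.ofReal r with hR
  have hR0 : R ≠ 0 := by
    simp only [hR, Ne, ENNReal.ofReal_eq_zero, not_le]
    exact hr
  have hRt : R ≠ ⊤ := ENNReal.ofReal_ne_top
  set X := ∫⁻ y in Metric.ball x r, W w y ^ p with hX
  have hXeq : (∫⁻ y in Metric.ball x r, ENNReal.ofReal (w y ^ p)) = X := by
    rw [hX]
    apply lintegral_congr
    intro y
    rw [← ENNReal.ofReal_rpow_of_nonneg (hw y) (le_of_lt hp0)]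
    rfl
  have hterm : ENNReal.ofReal (r ^ α) *
      ((ENNReal.ofReal (r ^ (n:ℝ)))⁻¹ *
        ∫⁻ y in Metric.ball x r, ENNReal.ofReal (w y ^ p)) ^ (1/p) ≤ A₀ := by
    rw [hA₀, MCnorm]
    refine le_trans ?_ (le_iSup (fun z : Rn n =>
      ⨆ rr : {r : ℝ // 0 < r}, ENNReal.ofReal (rr.1 ^ α) *
        ((ENNReal.ofReal (rr.1 ^ (n : ℝ)))⁻¹ *
          ∫⁻ y in Metric.ball z rr.1, ENNReal.ofReal (w y ^ p)) ^ (1 / p)) x)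
    exact le_iSup (fun rr : {r : ℝ // 0 < r} =>
      ENNReal.ofReal (rr.1 ^ α) *
        ((ENNReal.ofReal (rr.1 ^ (n : ℝ)))⁻¹ *
          ∫⁻ y in Metric.ball x rr.1, ENNReal.ofReal (w y ^ p)) ^ (1 / p)) ⟨r, hr⟩
  rw [hXeq] at hterm
  have hRα : ENNReal.ofReal (r ^ α) = R ^ α := (ENNReal.ofReal_rpow_of_pos hr).symm
  have hRn : ENNReal.ofReal (r ^ (n:ℝ)) = R ^ (n:ℝ) := (ENNReal.ofReal_rpow_of_pos hr).symm
  rw [hRα, hRn] at hterm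
  set Y := (R ^ (n:ℝ))⁻¹ * X with hY
  have hRα0 : R ^ α ≠ 0 := by
    simp [ENNReal.rpow_eq_zero_iff, hR0, hRt]
  have hRαt : R ^ α ≠ ⊤ := by
    simp [ENNReal.rpow_eq_top_iff, hR0, hRt]
  have hRn0 : R ^ (n:ℝ) ≠ 0 := by
    simp [ENNReal.rpow_eq_zero_iff, hR0, hRt]
  have hRnt : R ^ (n:ℝ) ≠ ⊤ := by
    simp [ENNReal.rpow_eq_top_iff, hR0, hRt]
  have hA1t : A₀ + 1 ≠ ⊤ := ENNReal.add_ne_top.2 ⟨hMC, ENNReal.one_ne_top⟩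
  have h1 : Y ^ (1/p) ≤ (R ^ α)⁻¹ * (A₀ + 1) := by
    calc Y ^ (1/p) = (R ^ α)⁻¹ * (R ^ α * Y ^ (1/p)) := by
          rw [← mul_assoc, ENNReal.inv_mul_cancel hRα0 hRαt, one_mul]
    _ ≤ (R ^ α)⁻¹ * A₀ := mul_le_mul_right hterm _
    _ ≤ (R ^ α)⁻¹ * (A₀ + 1) := mul_le_mul_right le_self_add _
  have h2 : Y ≤ ((R ^ α)⁻¹ * (A₀ + 1)) ^ p := by
    calc Y = (Y ^ (1/p)) ^ p := by
          rw [← ENNReal.rpow_mul, one_div, inv_mul_cancel₀ (by linarith : p ≠ 0),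
            ENNReal.rpow_one]
    _ ≤ ((R ^ α)⁻¹ * (A₀ + 1)) ^ p := ENNReal.rpow_le_rpow h1 (le_of_lt hp0)
  have h3 : ((R ^ α)⁻¹ * (A₀ + 1)) ^ p = (R ^ (α*p))⁻¹ * (A₀ + 1) ^ p := by
    rw [ENNReal.mul_rpow_of_ne_top (by simp [hRα0]) hA1t]
    congr 1
    rw [ENNReal.inv_rpow, ← ENNReal.rpow_mul]
  have hXY : X = R ^ (n:ℝ) * Y := by
    rw [hY, ← mul_assoc, ENNReal.mul_inv_cancel hRn0 hRnt, one_mul]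
  calc X = R ^ (n:ℝ) * Y := hXY
  _ ≤ R ^ (n:ℝ) * ((R ^ (α*p))⁻¹ * (A₀ + 1) ^ p) := by
      rw [← h3]
      exact mul_le_mul_right h2 _
  _ = (A₀ + 1) ^ p * R ^ ((n:ℝ) - α * p) := by
      rw [show ((n:ℝ) - α * p) = (n:ℝ) + (-(α * p)) by ring,
        ENNReal.rpow_add _ _ hR0 hRt, ENNReal.rpow_neg]
      ring

theorem mc_subset_ks_main {n : ℕ} {α p : ℝ} (hα : 0 < α) (hp : 1 < p) (hpn : p ≤ n / α)
    (w : Rn n → ℝ) (hw : 0 ≤ w) (hwm : Measurable w)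
    (hMC : MCnorm n α p w ≠ ⊤) :
    KSnorm n α w ≠ ⊤ := by
  have hαp : α * p ≤ (n:ℝ) := by
    rw [le_div_iff₀ hα] at hpn
    linarith
  have hαn : α < (n:ℝ) := by nlinarith
  have hn : 0 < n := by
    have h0 : (0:ℝ) < n := lt_trans hα hαn
    exact_mod_cast h0
  set A : ℝ≥0∞ := MCnorm n α p w + 1 with hA
  have hA0 : A ≠ 0 := by
    rw [hA]
    simp
  have hAt : A ≠ ⊤ := ENNReal.add_ne_top.2 ⟨hMC, ENNReal.one_ne_top⟩
  have hball : ∀ (x : Rn n) (r : ℝ), 0 < r →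
      ∫⁻ y in Metric.ball x r, W w y ^ p ≤ A ^ p * (ENNReal.ofReal r) ^ ((n:ℝ) - α * p) :=
    fun x r hr => ball_bound hα hp hw hMC x r hr
  set CC : ℝ≥0∞ := cK n α * (2 * ((box n).card : ℝ≥0∞)) * (Dc n α p A * CT α p) with hCC
  have hCCt : CC ≠ ⊤ := by
    rw [hCC]
    apply ENNReal.mul_ne_top
    · apply ENNReal.mul_ne_top cK_ne_top
      exact ENNReal.mul_ne_top (by simp) (ENNReal.natCast_ne_top _)
    · exact ENNReal.mul_ne_top (Dc_ne_top hA0 hAt) (CT_ne_top hα hp)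
  have key : ∀ (j : ℤ) (k : Fin n → ℤ),
      (∫⁻ x in cube n j k, ENNReal.ofReal (w x))⁻¹ *
        (∫⁻ x in cube n j k, ∫⁻ y in cube n j k,
          ENNReal.ofReal (w x * w y * ‖x - y‖ ^ (α - (n:ℝ)))) ≤ CC := by
    intro j k
    set aQ := ∫⁻ x in cube n j k, ENNReal.ofReal (w x) with haQ
    have haQW : aQ = ∫⁻ x in cube n j k, W w x := rfl
    have hIQ : (∫⁻ x in cube n j k, ∫⁻ y in cube n j k,
        ENNReal.ofReal (w x * w y * ‖x - y‖ ^ (α - (n:ℝ)))) ≤ CC * aQ := by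
      calc (∫⁻ x in cube n j k, ∫⁻ y in cube n j k,
          ENNReal.ofReal (w x * w y * ‖x - y‖ ^ (α - (n:ℝ))))
          ≤ cK n α * (2 * ((box n).card : ℝ≥0∞)) *
            ∑' σ : ℕ × (Fin n → ℤ), E (lv j σ.1 * (α - (n:ℝ))) * asub w j k σ * asub w j k σ :=
            IQ_le hn hαn hw hwm j k
      _ ≤ cK n α * (2 * ((box n).card : ℝ≥0∞)) *
            (Dc n α p A * CT α p * ∫⁻ x in cube n j k, W w x) :=
            mul_le_mul_right (TT_le hα hp hαp hwm hA0 hAt hball j k) _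
      _ = CC * aQ := by
            rw [hCC, haQW]
            ring
    rcases eq_or_ne aQ 0 with h0 | h0
    · have : (∫⁻ x in cube n j k, ∫⁻ y in cube n j k,
          ENNReal.ofReal (w x * w y * ‖x - y‖ ^ (α - (n:ℝ)))) = 0 := by
        apply le_antisymm _ (zero_le)
        calc _ ≤ CC * aQ := hIQ
        _ = 0 := by rw [h0, mul_zero]
      rw [this, mul_zero]
      exact zero_le
    · have haQt : aQ ≠ ⊤ := by
        apply ne_top_of_le_ne_top
          (ENNReal.mul_ne_top (Dc_ne_top hA0 hAt) (E_ne_top ((j:ℝ) * ((n:ℝ) - α))))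
        rw [haQW]
        exact mass_bound hα hp hαp hwm hball j k (le_refl _)
      calc (∫⁻ x in cube n j k, ENNReal.ofReal (w x))⁻¹ *
          (∫⁻ x in cube n j k, ∫⁻ y in cube n j k,
            ENNReal.ofReal (w x * w y * ‖x - y‖ ^ (α - (n:ℝ))))
          ≤ aQ⁻¹ * (CC * aQ) := mul_le_mul_right hIQ _
      _ = CC := by
          rw [mul_comm CC aQ, ← mul_assoc, ENNReal.inv_mul_cancel h0 haQt, one_mul]
  apply ne_top_of_le_ne_top hCCt
  rw [KSnorm]
  apply iSup_le
  rintro ⟨Q, hQ⟩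
  obtain ⟨j, k, rfl⟩ := hQ
  exact key j k

end MCKS

/-- Morrey–Campanato with exponent `p > 1` is contained in Kerman–Sawyer. -/
theorem mc_subset_ks {n : ℕ} {α p : ℝ} (hα : 0 < α) (hp : 1 < p) (hpn : p ≤ n / α)
    (w : Rn n → ℝ) (hw : 0 ≤ w) (hwm : Measurable w)
    (hMC : MCnorm n α p w ≠ ⊤) :
    KSnorm n α w ≠ ⊤ :=
  MCKS.mc_subset_ks_main hα hp hpn w hw hwm hMC
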